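/- arXiv:1809.03028 — 3 statements merged into one kernel-verified Lean document; each statement's English description precedes it below -/
import Mathlib

section
/- For every β ∈ ℕ and every fixed q ∈ C_c^∞(ℝ) with support contained in [3/4, 4/3] and q ≡ 1 on [1, 5/4], there is a constant C > 0 such that for every real a with |a| ≥ 4, setting ν = ia, g(ξ) = q(ξ)·(ξ^{ν+1} − 1) for ξ > 0 (and g = 0 for ξ ≤ 0), and I_ν = [1, 1 + 1/|a|], the following holds for every ξ ∈ I_ν: | ∫₀¹ t^β · Σ_{m+n ≤ β, m ≤ β−1} (t−1)^m · (A_{m,n} g′)(1 + t(ξ−1)) dt | ≤ C·|a|^{2β}. Here, for m, n ∈ ℕ, A_{m,n} denotes the sum, over all sequences (l₁, …, l_{m+n}) ∈ {0,1}^{m+n} containing exactly m zeros and n ones, of the compositions W_{l₁}∘⋯∘W_{l_{m+n}}, where W₀ is the operator h ↦ h″ and W₁ = Û. -/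
open Complex Finset intervalIntegral

/-- The operator `Û f (ξ) = i((ν−1)·f′(ξ) − ξ·f″(ξ))`. -/
noncomputable def hatU (ν : ℂ) (f : ℝ → ℂ) : ℝ → ℂ :=
  fun ξ => Complex.I * ((ν - 1) * deriv f ξ - (ξ : ℂ) * deriv (deriv f) ξ)

/-- `W₀ = d²/dξ²` and `W₁ = Û`. -/
noncomputable def Wop (ν : ℂ) : Fin 2 → (ℝ → ℂ) → (ℝ → ℂ) :=
  fun i => if i = 0 then (fun h => deriv (deriv h)) else hatU ν

/-- `A_{m,n}` is the sum, over all sequences in `{0,1}^{m+n}` with exactly `m` zeros and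
`n` ones, of the corresponding compositions `W_{l₁}∘⋯∘W_{l_{m+n}}`. -/
noncomputable def Aop (ν : ℂ) (m n : ℕ) (h : ℝ → ℂ) : ℝ → ℂ :=
  ∑ s ∈ Finset.univ.filter
      (fun s : Fin (m + n) → Fin 2 => (Finset.univ.filter fun i => s i = 0).card = m),
    ((List.ofFn fun i => Wop ν (s i)).foldr (· ∘ ·) id) h

/-- The function `g(ξ) = q(ξ)·(ξ^{ν+1} − 1)` for `ξ > 0` (and `0` for `ξ ≤ 0`),
where `ν = ia`. -/
noncomputable def gfun (q : ℝ → ℂ) (a : ℝ) : ℝ → ℂ :=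
  fun ξ => if 0 < ξ then q ξ * ((ξ : ℂ) ^ (Complex.I * a + 1) - 1) else 0


noncomputable def Pfun (μ : ℂ) (x : ℝ) : ℂ := Complex.exp (μ * (Real.log x : ℂ))

lemma ofReal_log_contDiffOn : ContDiffOn ℝ (⊤:ℕ∞) (fun x : ℝ => ((Real.log x : ℝ) : ℂ)) (Set.Ioi 0) :=
  Complex.ofRealCLM.contDiff.comp_contDiffOn
    (Real.contDiffOn_log.mono (fun x hx => ne_of_gt hx))

lemma Pfun_contDiffOn (μ : ℂ) : ContDiffOn ℝ (⊤:ℕ∞) (Pfun μ) (Set.Ioi 0) :=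
  Complex.contDiff_exp.comp_contDiffOn (contDiffOn_const.mul ofReal_log_contDiffOn)

lemma Pfun_hasDerivAt (μ : ℂ) {x : ℝ} (hx : 0 < x) :
    HasDerivAt (Pfun μ) (μ * Pfun (μ - 1) x) x := by
  have h1 : HasDerivAt (fun y : ℝ => ((Real.log y : ℝ) : ℂ)) (x⁻¹ : ℝ) x :=
    (Real.hasDerivAt_log hx.ne').ofReal_comp
  have h2 := ((h1.const_mul μ).cexp)
  convert h2 using 1
  show μ * Complex.exp ((μ-1) * (Real.log x : ℂ)) = Complex.exp (μ * (Real.log x:ℂ)) * (μ * ((x:ℝ)⁻¹ : ℝ))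
  have hxne : (x : ℂ) ≠ 0 := by exact_mod_cast hx.ne'
  have hinv : ((x⁻¹ : ℝ) : ℂ) = (x:ℂ)⁻¹ := by push_cast; ring
  have hexp : Complex.exp ((μ - 1) * (Real.log x : ℂ)) =
      Complex.exp (μ * (Real.log x : ℂ)) * (x:ℂ)⁻¹ := by
    rw [sub_mul, one_mul, Complex.exp_sub]
    congr 1
    rw [← Complex.ofReal_exp, Real.exp_log hx]
  rw [hexp, hinv]; ring
  rfl

lemma Pfun_norm_le {μ : ℂ} (hre : μ.re ≤ 0) {x : ℝ} (hx : 1 ≤ x) : ‖Pfun μ x‖ ≤ 1 := by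
  rw [Pfun, Complex.norm_exp]
  have : (μ * (Real.log x : ℂ)).re = μ.re * Real.log x := by simp [Complex.mul_re]
  rw [this]
  have := Real.log_nonneg hx
  exact Real.exp_le_one_iff.mpr (mul_nonpos_of_nonpos_of_nonneg hre this)

lemma mul_Pfun {μ : ℂ} {x : ℝ} (hx : 0 < x) : (x:ℂ) * Pfun (μ - 1) x = Pfun μ x := by
  rw [Pfun, Pfun, sub_mul, one_mul, Complex.exp_sub]
  rw [← Complex.ofReal_exp, Real.exp_log hx]
  have hxne : (x : ℂ) ≠ 0 := by exact_mod_cast hx.ne'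
  field_simp

lemma eqOn_deriv {f g : ℝ → ℂ} {s : Set ℝ} (hs : IsOpen s) (h : Set.EqOn f g s) :
    Set.EqOn (deriv f) (deriv g) s := fun x hx =>
  Filter.EventuallyEq.deriv_eq (Filter.eventuallyEq_of_mem (hs.mem_nhds hx) h)

lemma step_deriv {s : Set ℝ} (hs : IsOpen s) (hsub : s ⊆ Set.Ioi 0) {f : ℝ → ℂ} {c μ : ℂ}
    (h : Set.EqOn f (fun x => c * Pfun μ x) s) :
    Set.EqOn (deriv f) (fun x => c * μ * Pfun (μ - 1) x) s := by
  intro x hx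
  rw [eqOn_deriv hs h hx, ((Pfun_hasDerivAt μ (hsub hx)).const_mul c).deriv]
  ring

lemma step_W0 {s : Set ℝ} (hs : IsOpen s) (hsub : s ⊆ Set.Ioi 0) {f : ℝ → ℂ} {c μ : ℂ}
    (h : Set.EqOn f (fun x => c * Pfun μ x) s) :
    Set.EqOn (deriv (deriv f)) (fun x => c * μ * (μ - 1) * Pfun (μ - 2) x) s := by
  have h2 := step_deriv hs hsub (step_deriv hs hsub h)
  intro x hx
  rw [h2 hx]
  have : μ - 1 - 1 = μ - 2 := by ring
  rw [this]

lemma step_hatU {s : Set ℝ} (hs : IsOpen s) (hsub : s ⊆ Set.Ioi 0) (ν : ℂ) {f : ℝ → ℂ} {c μ : ℂ}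
    (h : Set.EqOn f (fun x => c * Pfun μ x) s) :
    Set.EqOn (hatU ν f) (fun x => Complex.I * c * μ * (ν - μ) * Pfun (μ - 1) x) s := by
  intro x hx
  have h1 := step_deriv hs hsub h hx
  have h2 := step_W0 hs hsub h hx
  rw [hatU, h1, h2]
  have hxp : (0:ℝ) < x := hsub hx
  have : (x:ℂ) * (c * μ * (μ-1) * Pfun (μ-2) x) = c * μ * (μ-1) * Pfun (μ-1) x := by
    rw [mul_comm, mul_assoc]
    congr 1
    have : μ - 2 = (μ - 1) - 1 := by ring
    rw [this, mul_comm, mul_Pfun hxp]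
  rw [this]
  ring

lemma key (a : ℝ) (ha : 1 ≤ |a|) (J : ℕ) {s : Set ℝ} (hs : IsOpen s) (hsub : s ⊆ Set.Ioi 0)
    (l : List (Fin 2)) :
    ∀ (j : ℕ) (c : ℂ) (f : ℝ → ℂ),
    j + 2 * l.length ≤ J →
    Set.EqOn f (fun x => c * Pfun (Complex.I * a - (j:ℂ)) x) s →
    ∃ c' : ℂ,
      ‖c'‖ ≤ ‖c‖ * (((J:ℝ) + 1) * ((J:ℝ) + 2)) ^ l.length * |a| ^ (l.length + l.count 0) ∧
      Set.EqOn (l.foldr (fun i F => Wop (Complex.I * a) i F) f)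
        (fun x => c' * Pfun (Complex.I * a - ((j + l.length + l.count 0 : ℕ) : ℂ)) x) s := by
  induction l with
  | nil =>
    intro j c f _ h
    exact ⟨c, by simp, by simpa using h⟩
  | cons i l ih =>
    intro j c f hJ h
    obtain ⟨c₁, hc₁, heq₁⟩ := ih j c f (by simp at hJ ⊢; omega) h
    set ν : ℂ := Complex.I * a with hν
    set j₁ : ℕ := j + l.length + l.count 0 with hj₁
    have hj₁J : j₁ ≤ J := by
      have := (List.count_le_length : l.count (0 : Fin 2) ≤ l.length)
      simp [hj₁] at *
      omega
    have hnorm1 : ‖ν - (j₁:ℂ)‖ ≤ ((J:ℝ) + 1) * |a| := by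
      calc ‖ν - (j₁:ℂ)‖ ≤ ‖ν‖ + ‖(j₁:ℂ)‖ := norm_sub_le _ _
        _ = |a| + j₁ := by
            rw [hν, norm_mul, Complex.norm_I, one_mul]
            simp [Complex.norm_real]
        _ ≤ |a| + (J:ℝ) * |a| := by
            have : (j₁:ℝ) ≤ (J:ℝ) := by exact_mod_cast hj₁J
            nlinarith
        _ = ((J:ℝ) + 1) * |a| := by ring
    have hnorm2 : ‖ν - (j₁:ℂ) - 1‖ ≤ ((J:ℝ) + 2) * |a| := by
      calc ‖ν - (j₁:ℂ) - 1‖ ≤ ‖ν - (j₁:ℂ)‖ + ‖(1:ℂ)‖ := norm_sub_le _ _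
        _ ≤ ((J:ℝ)+1) * |a| + 1 := by rw [norm_one]; linarith [hnorm1]
        _ ≤ ((J:ℝ)+2) * |a| := by nlinarith
    have hMpos : (0:ℝ) ≤ ((J:ℝ) + 1) * ((J:ℝ) + 2) := by positivity
    have hfold : (i :: l).foldr (fun i F => Wop ν i F) f
        = Wop ν i (l.foldr (fun i F => Wop ν i F) f) := rfl
    have hi : i = 0 ∨ i = 1 := by fin_cases i <;> simp
    rcases hi with rfl | rfl
    · -- W₀ case
      refine ⟨c₁ * (ν - (j₁:ℂ)) * (ν - (j₁:ℂ) - 1), ?_, ?_⟩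
      · have hcount : ((0:Fin 2) :: l).count 0 = l.count 0 + 1 := by simp
        rw [hcount]
        calc ‖c₁ * (ν - (j₁:ℂ)) * (ν - (j₁:ℂ) - 1)‖
            = ‖c₁‖ * ‖ν - (j₁:ℂ)‖ * ‖ν - (j₁:ℂ) - 1‖ := by rw [norm_mul, norm_mul]
          _ ≤ (‖c‖ * (((J:ℝ)+1)*((J:ℝ)+2)) ^ l.length * |a| ^ (l.length + l.count 0))
              * (((J:ℝ)+1) * |a|) * (((J:ℝ)+2) * |a|) := by
              have h1 : (0:ℝ) ≤ ‖ν - (j₁:ℂ)‖ := norm_nonneg _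
              have h2 : (0:ℝ) ≤ ‖ν - (j₁:ℂ) - 1‖ := norm_nonneg _
              have h3 : (0:ℝ) ≤ ‖c₁‖ := norm_nonneg _
              have h4 : (0:ℝ) ≤ ‖c‖ * (((J:ℝ)+1)*((J:ℝ)+2)) ^ l.length * |a| ^ (l.length + l.count 0) := by positivity
              nlinarith [mul_le_mul hc₁ hnorm1 h1 h4,
                mul_le_mul (mul_le_mul hc₁ hnorm1 h1 h4) hnorm2 h2 (by positivity)]
          _ = ‖c‖ * (((J:ℝ)+1)*((J:ℝ)+2)) ^ (l.length + 1) * |a| ^ (l.length + l.count 0 + 2) := by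
              ring
          _ = ‖c‖ * (((J:ℝ)+1)*((J:ℝ)+2)) ^ ((0::l : List (Fin 2)).length) * |a| ^ ((0::l : List (Fin 2)).length + (l.count 0 + 1)) := by
              simp only [List.length_cons]
              ring
      · have heq₂ := step_W0 hs hsub heq₁
        intro x hx
        rw [hfold]
        have hW : Wop ν 0 = fun h => deriv (deriv h) := by simp [Wop]
        rw [hW]
        have hexp : ν - (j₁:ℂ) - 2 = ν - ((j + ((0:Fin 2)::l).length + ((0:Fin 2)::l).count 0 : ℕ) : ℂ) := by
          have h5 : ((0:Fin 2)::l).count 0 = l.count 0 + 1 := by simp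
          rw [h5]
          simp only [List.length_cons, hj₁]
          push_cast
          ring
        exact (heq₂ hx).trans (by rw [hexp])
    · -- Û case
      refine ⟨Complex.I * c₁ * (ν - (j₁:ℂ)) * (ν - (ν - (j₁:ℂ))), ?_, ?_⟩
      · have hcount : ((1:Fin 2) :: l).count 0 = l.count 0 := by simp
        rw [hcount]
        have hνν : ν - (ν - (j₁:ℂ)) = (j₁:ℂ) := by ring
        calc ‖Complex.I * c₁ * (ν - (j₁:ℂ)) * (ν - (ν - (j₁:ℂ)))‖
            = ‖c₁‖ * ‖ν - (j₁:ℂ)‖ * (j₁:ℝ) := by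
              rw [hνν, norm_mul, norm_mul, norm_mul, Complex.norm_I, one_mul]
              simp
          _ ≤ (‖c‖ * (((J:ℝ)+1)*((J:ℝ)+2)) ^ l.length * |a| ^ (l.length + l.count 0))
              * (((J:ℝ)+1) * |a|) * ((J:ℝ)+2) := by
              have hj₁R : (j₁:ℝ) ≤ (J:ℝ) + 2 := by
                have : (j₁:ℝ) ≤ (J:ℝ) := by exact_mod_cast hj₁J
                linarith
              have h1 : (0:ℝ) ≤ ‖ν - (j₁:ℂ)‖ := norm_nonneg _
              have h4 : (0:ℝ) ≤ ‖c‖ * (((J:ℝ)+1)*((J:ℝ)+2)) ^ l.length * |a| ^ (l.length + l.count 0) := by positivity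
              nlinarith [mul_le_mul hc₁ hnorm1 h1 h4,
                mul_le_mul (mul_le_mul hc₁ hnorm1 h1 h4) hj₁R (Nat.cast_nonneg j₁) (by positivity)]
          _ = ‖c‖ * (((J:ℝ)+1)*((J:ℝ)+2)) ^ (l.length + 1) * |a| ^ (l.length + l.count 0 + 1) := by
              ring
          _ = ‖c‖ * (((J:ℝ)+1)*((J:ℝ)+2)) ^ ((1::l : List (Fin 2)).length) * |a| ^ ((1::l : List (Fin 2)).length + l.count 0) := by
              simp only [List.length_cons]
              ring
      · have heq₂ := step_hatU hs hsub ν heq₁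
        intro x hx
        rw [hfold]
        have hW : Wop ν 1 = hatU ν := by simp [Wop]
        rw [hW]
        have hexp : ν - (j₁:ℂ) - 1 = ν - ((j + ((1:Fin 2)::l).length + ((1:Fin 2)::l).count 0 : ℕ) : ℂ) := by
          have h5 : ((1:Fin 2)::l).count 0 = l.count 0 := by simp
          rw [h5]
          simp only [List.length_cons, hj₁]
          push_cast
          ring
        exact (heq₂ hx).trans (by rw [hexp])

lemma deriv_contDiffOn {f : ℝ → ℂ} (hf : ContDiffOn ℝ (⊤:ℕ∞) f (Set.Ioi 0)) :
    ContDiffOn ℝ (⊤:ℕ∞) (deriv f) (Set.Ioi 0) :=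
  hf.deriv_of_isOpen isOpen_Ioi (by simp)

lemma Wop_contDiffOn (ν : ℂ) (i : Fin 2) {f : ℝ → ℂ}
    (hf : ContDiffOn ℝ (⊤:ℕ∞) f (Set.Ioi 0)) :
    ContDiffOn ℝ (⊤:ℕ∞) (Wop ν i f) (Set.Ioi 0) := by
  have h1 := deriv_contDiffOn hf
  have h2 := deriv_contDiffOn h1
  have hi : i = 0 ∨ i = 1 := by fin_cases i <;> simp
  rcases hi with rfl | rfl
  · simpa [Wop] using h2
  · have hW : Wop ν 1 = hatU ν := by simp [Wop]
    rw [hW]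
    unfold hatU
    exact contDiffOn_const.mul ((contDiffOn_const.mul h1).sub
      ((Complex.ofRealCLM.contDiff.contDiffOn).mul h2))

lemma fold_contDiffOn (ν : ℂ) (l : List (Fin 2)) {f : ℝ → ℂ}
    (hf : ContDiffOn ℝ (⊤:ℕ∞) f (Set.Ioi 0)) :
    ContDiffOn ℝ (⊤:ℕ∞) (l.foldr (fun i F => Wop ν i F) f) (Set.Ioi 0) := by
  induction l with
  | nil => exact hf
  | cons i l ih => exact Wop_contDiffOn ν i ih

lemma eqOn_Icc_of_eqOn_Ioo {f g : ℝ → ℂ}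
    (hf : ContinuousOn f (Set.Ioi 0)) (hg : ContinuousOn g (Set.Ioi 0))
    (h : Set.EqOn f g (Set.Ioo (1:ℝ) (5/4))) : Set.EqOn f g (Set.Icc (1:ℝ) (5/4)) := by
  intro x hx
  have hxpos : (0:ℝ) < x := lt_of_lt_of_le one_pos hx.1
  have hmem : Set.Ioi (0:ℝ) ∈ nhds x := Ioi_mem_nhds hxpos
  have hfx : ContinuousAt f x := hf.continuousAt hmem
  have hgx : ContinuousAt g x := hg.continuousAt hmem
  have hcl : x ∈ closure (Set.Ioo (1:ℝ) (5/4)) := by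
    rw [closure_Ioo (by norm_num : (1:ℝ) ≠ 5/4)]; exact hx
  have hne : (nhdsWithin x (Set.Ioo (1:ℝ) (5/4))).NeBot :=
    mem_closure_iff_nhdsWithin_neBot.mp hcl
  have t1 : Filter.Tendsto f (nhdsWithin x (Set.Ioo (1:ℝ) (5/4))) (nhds (f x)) :=
    hfx.continuousWithinAt
  have t2 : Filter.Tendsto g (nhdsWithin x (Set.Ioo (1:ℝ) (5/4))) (nhds (g x)) :=
    hgx.continuousWithinAt
  have hev : f =ᶠ[nhdsWithin x (Set.Ioo (1:ℝ) (5/4))] g :=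
    eventually_mem_nhdsWithin.mono (fun y hy => h hy)
  exact tendsto_nhds_unique (t1.congr' hev) t2

lemma count_ofFn {k : ℕ} (s : Fin k → Fin 2) :
    (List.ofFn s).count 0 = (Finset.univ.filter fun i => s i = 0).card := by
  induction k with
  | zero => simp
  | succ k ih =>
    rw [List.ofFn_succ, List.count_cons, ih (fun i => s i.succ)]
    rw [Finset.card_filter, Finset.card_filter, Fin.sum_univ_succ]
    simp [add_comm]

lemma foldr_comp_apply (ν : ℂ) (l : List (Fin 2)) (h : ℝ → ℂ) :
    ((l.map (Wop ν)).foldr (· ∘ ·) id) h = l.foldr (fun i F => Wop ν i F) h := by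
  induction l with
  | nil => rfl
  | cons i l ih => exact congrArg (Wop ν i) ih

lemma ofFn_fold (ν : ℂ) {k : ℕ} (s : Fin k → Fin 2) (h : ℝ → ℂ) :
    ((List.ofFn fun i => Wop ν (s i)).foldr (· ∘ ·) id) h
      = (List.ofFn s).foldr (fun i F => Wop ν i F) h := by
  rw [show (List.ofFn fun i => Wop ν (s i)) = (List.ofFn s).map (Wop ν) from
    by rw [List.map_ofFn]; rfl]
  exact foldr_comp_apply ν _ h

lemma gfun_eqOn_Ioi (q : ℝ → ℂ) (a : ℝ) :
    Set.EqOn (gfun q a) (fun x => q x * (Pfun (Complex.I * a + 1) x - 1)) (Set.Ioi 0) := by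
  intro x hx
  have hxpos : (0:ℝ) < x := hx
  have hxne : (x:ℂ) ≠ 0 := by exact_mod_cast hxpos.ne'
  rw [gfun]
  simp only [if_pos hxpos]
  congr 2
  rw [Complex.cpow_def_of_ne_zero hxne, ← Complex.ofReal_log hxpos.le, mul_comm]
  rfl

lemma gfun_contDiffOn (q : ℝ → ℂ) (a : ℝ) (hq : ContDiff ℝ (⊤ : ℕ∞) q) :
    ContDiffOn ℝ (⊤:ℕ∞) (gfun q a) (Set.Ioi 0) := by
  apply ContDiffOn.congr (f := fun x => q x * (Pfun (Complex.I * a + 1) x - 1))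
  · exact (hq.contDiffOn).mul ((Pfun_contDiffOn _).sub contDiffOn_const)
  · exact fun x hx => gfun_eqOn_Ioi q a hx

lemma gfun_eqOn_V (q : ℝ → ℂ) (a : ℝ) (hone : Set.EqOn q 1 (Set.Icc (1 : ℝ) (5 / 4))) :
    Set.EqOn (gfun q a) (fun x => Pfun (Complex.I * a + 1) x - 1) (Set.Ioo (1:ℝ) (5/4)) := by
  intro x hx
  rw [gfun_eqOn_Ioi q a (by exact lt_of_lt_of_le one_pos hx.1.le : x ∈ Set.Ioi (0:ℝ))]
  have h1 : q x = 1 := hone (Set.Ioo_subset_Icc_self hx)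
  show q x * (Pfun (Complex.I * a + 1) x - 1) = Pfun (Complex.I * a + 1) x - 1
  rw [h1, one_mul]

lemma deriv_gfun_eqOn_V (q : ℝ → ℂ) (a : ℝ) (hone : Set.EqOn q 1 (Set.Icc (1 : ℝ) (5 / 4))) :
    Set.EqOn (deriv (gfun q a))
      (fun x => (Complex.I * a + 1) * Pfun (Complex.I * a - ((0:ℕ):ℂ)) x) (Set.Ioo (1:ℝ) (5/4)) := by
  intro x hx
  have hxpos : (0:ℝ) < x := lt_of_lt_of_le one_pos hx.1.le
  rw [eqOn_deriv isOpen_Ioo (gfun_eqOn_V q a hone) hx]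
  have hd : HasDerivAt (fun x : ℝ => Pfun (Complex.I * a + 1) x - 1)
      ((Complex.I * a + 1) * Pfun (Complex.I * a + 1 - 1) x) x :=
    (Pfun_hasDerivAt _ hxpos).sub_const 1
  rw [hd.deriv]
  norm_num

lemma per_s_bound (β : ℕ) (q : ℝ → ℂ) (hq : ContDiff ℝ (⊤ : ℕ∞) q)
    (hone : Set.EqOn q 1 (Set.Icc (1 : ℝ) (5 / 4))) (a : ℝ) (ha1 : 1 ≤ |a|)
    (m n : ℕ) (hm : m + 1 ≤ β) (hn : m + n ≤ β) (s : Fin (m + n) → Fin 2)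
    (hs : (Finset.univ.filter fun i => s i = 0).card = m)
    {x : ℝ} (hx : x ∈ Set.Icc (1:ℝ) (5/4)) :
    ‖((List.ofFn fun i => Wop (Complex.I * a) (s i)).foldr (· ∘ ·) id) (deriv (gfun q a)) x‖
      ≤ 2 * ((((2*β+2 : ℕ):ℝ) + 1) * (((2*β+2 : ℕ):ℝ) + 2)) ^ (2*β) * |a| ^ (2*β) := by
  set J : ℕ := 2*β+2 with hJdef
  set M : ℝ := (((J:ℕ):ℝ) + 1) * (((J:ℕ):ℝ) + 2) with hMdef
  have hM1 : (1:ℝ) ≤ M := by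
    rw [hMdef]; nlinarith [Nat.cast_nonneg (α := ℝ) J]
  set l : List (Fin 2) := List.ofFn s with hldef
  have hlen : l.length = m + n := List.length_ofFn
  have hcnt : l.count 0 = m := by rw [hldef, count_ofFn, hs]
  have hsub : Set.Ioo (1:ℝ) (5/4) ⊆ Set.Ioi 0 := fun y hy => lt_trans one_pos hy.1
  have hJ : 0 + 2 * l.length ≤ J := by rw [hlen]; omega
  obtain ⟨c', hc', heq⟩ := key a ha1 J isOpen_Ioo hsub l 0 (Complex.I * a + 1)
    (deriv (gfun q a)) hJ (deriv_gfun_eqOn_V q a hone)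
  have hg' : ContDiffOn ℝ (⊤:ℕ∞) (deriv (gfun q a)) (Set.Ioi 0) :=
    deriv_contDiffOn (gfun_contDiffOn q a hq)
  have hN : ContinuousOn (l.foldr (fun i F => Wop (Complex.I * a) i F) (deriv (gfun q a)))
      (Set.Ioi 0) := (fold_contDiffOn _ l hg').continuousOn
  have hφ : ContinuousOn
      (fun x => c' * Pfun (Complex.I * a - ((0 + l.length + l.count 0 : ℕ) : ℂ)) x)
      (Set.Ioi 0) := (contDiffOn_const.mul (Pfun_contDiffOn _)).continuousOn
  have heq' := eqOn_Icc_of_eqOn_Ioo hN hφ heq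
  rw [ofFn_fold, ← hldef, heq' hx]
  have hre : (Complex.I * a - ((0 + l.length + l.count 0 : ℕ) : ℂ)).re ≤ 0 := by
    simp [Complex.sub_re, Complex.mul_re]
    have h1 : (0:ℝ) ≤ (List.count 0 l : ℝ) := Nat.cast_nonneg _
    have h2 : (0:ℝ) ≤ (l.length : ℝ) := Nat.cast_nonneg _
    linarith
  have hP : ‖Pfun (Complex.I * a - ((0 + l.length + l.count 0 : ℕ) : ℂ)) x‖ ≤ 1 :=
    Pfun_norm_le hre hx.1
  have hnc : ‖Complex.I * a + 1‖ ≤ 2 * |a| := by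
    calc ‖Complex.I * (a:ℂ) + 1‖ ≤ ‖Complex.I * (a:ℂ)‖ + ‖(1:ℂ)‖ := norm_add_le _ _
      _ = |a| + 1 := by rw [norm_mul, Complex.norm_I, one_mul, norm_one]; simp
      _ ≤ 2 * |a| := by linarith
  have hcb : ‖c'‖ ≤ 2 * M ^ (2*β) * |a| ^ (2*β) := by
    have h1 : ‖c'‖ ≤ ‖Complex.I * a + 1‖ * M ^ l.length * |a| ^ (l.length + l.count 0) := hc'
    have h2 : M ^ l.length ≤ M ^ (2*β) := pow_le_pow_right₀ hM1 (by omega)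
    have h3 : ‖Complex.I * a + 1‖ * |a| ^ (l.length + l.count 0) ≤ 2 * |a| ^ (2*β) := by
      calc ‖Complex.I * a + 1‖ * |a| ^ (l.length + l.count 0)
          ≤ (2 * |a|) * |a| ^ (l.length + l.count 0) := by
            apply mul_le_mul_of_nonneg_right hnc (by positivity)
        _ = 2 * |a| ^ (l.length + l.count 0 + 1) := by ring
        _ ≤ 2 * |a| ^ (2*β) := by
            have : l.length + l.count 0 + 1 ≤ 2*β := by rw [hlen, hcnt]; omega
            have := pow_le_pow_right₀ ha1 this
            linarith
    calc ‖c'‖ ≤ ‖Complex.I * a + 1‖ * M ^ l.length * |a| ^ (l.length + l.count 0) := h1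
      _ ≤ ‖Complex.I * a + 1‖ * M ^ (2*β) * |a| ^ (l.length + l.count 0) := by
          apply mul_le_mul_of_nonneg_right (mul_le_mul_of_nonneg_left h2 (norm_nonneg _))
            (by positivity)
      _ = (‖Complex.I * a + 1‖ * |a| ^ (l.length + l.count 0)) * M ^ (2*β) := by ring
      _ ≤ (2 * |a| ^ (2*β)) * M ^ (2*β) := by
          apply mul_le_mul_of_nonneg_right h3 (by positivity)
      _ = 2 * M ^ (2*β) * |a| ^ (2*β) := by ring
  calc ‖c' * Pfun (Complex.I * a - ((0 + l.length + l.count 0 : ℕ) : ℂ)) x‖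
      = ‖c'‖ * ‖Pfun (Complex.I * a - ((0 + l.length + l.count 0 : ℕ) : ℂ)) x‖ := norm_mul _ _
    _ ≤ ‖c'‖ * 1 := mul_le_mul_of_nonneg_left hP (norm_nonneg _)
    _ = ‖c'‖ := mul_one _
    _ ≤ 2 * M ^ (2*β) * |a| ^ (2*β) := hcb

/-- Upper bound for the lower-order terms:
`|∫₀¹ t^β Σ_{m+n≤β, m≤β−1} (t−1)^m (A_{m,n} g′)(1+t(ξ−1)) dt| ≤ C |a|^{2β}`
for all `ξ ∈ I_ν = [1, 1+1/|a|]` and `|a| ≥ 4`. -/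
theorem lower_order_terms_upper_bound (β : ℕ) (q : ℝ → ℂ)
    (hq : ContDiff ℝ (⊤ : ℕ∞) q)
    (hsupp : Function.support q ⊆ Set.Icc (3 / 4 : ℝ) (4 / 3))
    (hone : Set.EqOn q 1 (Set.Icc (1 : ℝ) (5 / 4))) :
    ∃ C > 0, ∀ a : ℝ, 4 ≤ |a| →
      ∀ ξ ∈ Set.Icc (1 : ℝ) (1 + 1 / |a|),
        ‖∫ t in (0 : ℝ)..1, (t : ℂ) ^ β *
            ∑ m ∈ range β, ∑ n ∈ range (β - m + 1),
              ((t : ℂ) - 1) ^ m *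
                Aop (Complex.I * a) m n (deriv (gfun q a)) (1 + t * (ξ - 1))‖ ≤
          C * |a| ^ (2 * β) := by
  classical
  set T : ℝ := 2 * ((((2*β+2 : ℕ):ℝ) + 1) * (((2*β+2 : ℕ):ℝ) + 2)) ^ (2*β) with hT
  have hT0 : 0 < T := by rw [hT]; positivity
  set B : ℝ := (2:ℝ) ^ (2*β) * T with hB
  have hB0 : 0 < B := by rw [hB]; positivity
  set D : ℝ := ((β:ℝ) + 1) * (((β:ℝ) + 1) * B) with hD
  have hD0 : 0 < D := by rw [hD]; positivity
  refine ⟨D + 1, by positivity, ?_⟩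
  intro a ha ξ hξ
  have ha1 : (1:ℝ) ≤ |a| := by linarith
  have hainv : 1 / |a| ≤ 1 / 4 := by
    apply one_div_le_one_div_of_le <;> linarith
  have hbound : ∀ t ∈ Set.uIoc (0:ℝ) 1,
      ‖(t : ℂ) ^ β * ∑ m ∈ range β, ∑ n ∈ range (β - m + 1),
          ((t : ℂ) - 1) ^ m *
            Aop (Complex.I * a) m n (deriv (gfun q a)) (1 + t * (ξ - 1))‖ ≤ D * |a| ^ (2*β) := by
    intro t ht
    rw [Set.uIoc_of_le (by norm_num : (0:ℝ) ≤ 1)] at ht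
    set x : ℝ := 1 + t * (ξ - 1) with hxdef
    have hxIcc : x ∈ Set.Icc (1:ℝ) (5/4) := by
      constructor
      · rw [hxdef]; nlinarith [ht.1, ht.2, hξ.1, hξ.2]
      · rw [hxdef]; nlinarith [ht.1, ht.2, hξ.1, hξ.2]
    have hAop : ∀ m ∈ range β, ∀ n ∈ range (β - m + 1),
        ‖Aop (Complex.I * a) m n (deriv (gfun q a)) x‖ ≤ B * |a| ^ (2*β) := by
      intro m hm n hn
      rw [mem_range] at hm hn
      have hmn : m + n ≤ β := by omega
      rw [Aop, Finset.sum_apply]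
      calc ‖∑ s ∈ Finset.univ.filter
              (fun s : Fin (m + n) → Fin 2 => (Finset.univ.filter fun i => s i = 0).card = m),
            ((List.ofFn fun i => Wop (Complex.I * a) (s i)).foldr (· ∘ ·) id)
              (deriv (gfun q a)) x‖
          ≤ ∑ s ∈ Finset.univ.filter
              (fun s : Fin (m + n) → Fin 2 => (Finset.univ.filter fun i => s i = 0).card = m),
            ‖((List.ofFn fun i => Wop (Complex.I * a) (s i)).foldr (· ∘ ·) id)
              (deriv (gfun q a)) x‖ := norm_sum_le _ _
        _ ≤ ∑ s ∈ Finset.univ.filter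
              (fun s : Fin (m + n) → Fin 2 => (Finset.univ.filter fun i => s i = 0).card = m),
            (T * |a| ^ (2*β)) := by
            apply Finset.sum_le_sum
            intro s hsmem
            rw [Finset.mem_filter] at hsmem
            have := per_s_bound β q hq hone a ha1 m n (by omega) hmn s hsmem.2 hxIcc
            rw [hT]
            exact this
        _ = ((Finset.univ.filter
              (fun s : Fin (m + n) → Fin 2 => (Finset.univ.filter fun i => s i = 0).card = m)).card : ℝ)
            * (T * |a| ^ (2*β)) := by rw [Finset.sum_const, nsmul_eq_mul]
        _ ≤ (2:ℝ) ^ (2*β) * (T * |a| ^ (2*β)) := by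
            have h1 : (Finset.univ.filter
                (fun s : Fin (m + n) → Fin 2 => (Finset.univ.filter fun i => s i = 0).card = m)).card
                ≤ 2 ^ (m + n) := by
              calc _ ≤ (Finset.univ : Finset (Fin (m+n) → Fin 2)).card := Finset.card_filter_le _ _
                _ = 2 ^ (m + n) := by simp [Fintype.card_fun]
            have h1' : ((Finset.univ.filter
                (fun s : Fin (m + n) → Fin 2 => (Finset.univ.filter fun i => s i = 0).card = m)).card : ℝ)
                ≤ ((2:ℝ)) ^ (m+n) := by
              have := (Nat.cast_le (α := ℝ)).mpr h1
              rwa [Nat.cast_pow, Nat.cast_ofNat] at this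
            have hmn2 : m + n ≤ 2*β :=
              Nat.le_trans hmn (Nat.le_mul_of_pos_left β (by norm_num))
            have h2' : ((2:ℝ)) ^ (m+n) ≤ (2:ℝ) ^ (2*β) := by
              apply pow_le_pow_right₀
              · norm_num
              · exact hmn2
            exact mul_le_mul_of_nonneg_right (h1'.trans h2') (by positivity)
        _ = B * |a| ^ (2*β) := by rw [hB]; ring
    have htnorm : ‖(t:ℂ)^β‖ ≤ 1 := by
      rw [norm_pow]
      apply pow_le_one₀ (norm_nonneg _)
      rw [Complex.norm_real]
      rw [Real.norm_eq_abs, abs_le]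
      constructor <;> linarith [ht.1, ht.2]
    have ht1norm : ‖(t:ℂ) - 1‖ ≤ 1 := by
      rw [show (t:ℂ) - 1 = ((t - 1 : ℝ) : ℂ) by push_cast; ring, Complex.norm_real,
        Real.norm_eq_abs, abs_le]
      constructor <;> linarith [ht.1, ht.2]
    calc ‖(t : ℂ) ^ β * ∑ m ∈ range β, ∑ n ∈ range (β - m + 1),
          ((t : ℂ) - 1) ^ m * Aop (Complex.I * a) m n (deriv (gfun q a)) x‖
        = ‖(t:ℂ)^β‖ * ‖∑ m ∈ range β, ∑ n ∈ range (β - m + 1),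
          ((t : ℂ) - 1) ^ m * Aop (Complex.I * a) m n (deriv (gfun q a)) x‖ := norm_mul _ _
      _ ≤ 1 * ‖∑ m ∈ range β, ∑ n ∈ range (β - m + 1),
          ((t : ℂ) - 1) ^ m * Aop (Complex.I * a) m n (deriv (gfun q a)) x‖ := by
          apply mul_le_mul_of_nonneg_right htnorm (norm_nonneg _)
      _ = ‖∑ m ∈ range β, ∑ n ∈ range (β - m + 1),
          ((t : ℂ) - 1) ^ m * Aop (Complex.I * a) m n (deriv (gfun q a)) x‖ := one_mul _
      _ ≤ ∑ m ∈ range β, ‖∑ n ∈ range (β - m + 1),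
          ((t : ℂ) - 1) ^ m * Aop (Complex.I * a) m n (deriv (gfun q a)) x‖ := norm_sum_le _ _
      _ ≤ ∑ m ∈ range β, ∑ n ∈ range (β - m + 1),
          ‖((t : ℂ) - 1) ^ m * Aop (Complex.I * a) m n (deriv (gfun q a)) x‖ :=
          Finset.sum_le_sum (fun m _ => norm_sum_le _ _)
      _ ≤ ∑ m ∈ range β, ∑ n ∈ range (β - m + 1), (B * |a| ^ (2*β)) := by
          apply Finset.sum_le_sum
          intro m hm
          apply Finset.sum_le_sum
          intro n hn
          calc ‖((t : ℂ) - 1) ^ m * Aop (Complex.I * a) m n (deriv (gfun q a)) x‖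
              = ‖((t:ℂ) - 1)^m‖ * ‖Aop (Complex.I * a) m n (deriv (gfun q a)) x‖ := norm_mul _ _
            _ ≤ 1 * (B * |a| ^ (2*β)) := by
                apply mul_le_mul (by rw [norm_pow]; exact pow_le_one₀ (norm_nonneg _) ht1norm)
                  (hAop m hm n hn) (norm_nonneg _) (by norm_num)
            _ = B * |a| ^ (2*β) := one_mul _
      _ ≤ ∑ m ∈ range β, (((β:ℝ) + 1) * (B * |a| ^ (2*β))) := by
          apply Finset.sum_le_sum
          intro m hm
          rw [Finset.sum_const, nsmul_eq_mul, card_range]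
          apply mul_le_mul_of_nonneg_right _ (by positivity)
          have h2 : ((β - m : ℕ):ℝ) ≤ (β:ℝ) := by exact_mod_cast Nat.sub_le β m
          push_cast
          linarith
      _ = (β:ℝ) * (((β:ℝ) + 1) * (B * |a| ^ (2*β))) := by
          rw [Finset.sum_const, nsmul_eq_mul, card_range]
      _ ≤ D * |a| ^ (2*β) := by
          rw [hD]
          have hβ : (β:ℝ) ≤ (β:ℝ) + 1 := by linarith
          have h0 : (0:ℝ) ≤ ((β:ℝ) + 1) * (B * |a| ^ (2*β)) := by positivity
          nlinarith [pow_nonneg (abs_nonneg a) (2*β), hB0.le]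
  calc ‖∫ t in (0 : ℝ)..1, (t : ℂ) ^ β *
          ∑ m ∈ range β, ∑ n ∈ range (β - m + 1),
            ((t : ℂ) - 1) ^ m *
              Aop (Complex.I * a) m n (deriv (gfun q a)) (1 + t * (ξ - 1))‖
      ≤ (D * |a| ^ (2*β)) * |1 - 0| :=
        intervalIntegral.norm_integral_le_of_norm_le_const hbound
    _ = D * |a| ^ (2*β) := by rw [sub_zero, abs_one, mul_one]
    _ ≤ (D + 1) * |a| ^ (2*β) := by
        have : (0:ℝ) ≤ |a| ^ (2*β) := by positivity
        nlinarith
end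

section
/- For every β ∈ ℕ∖{0} there is a constant C > 4 such that the following holds. For every real a with |a| ≥ C, setting ν = ia, and for every ξ ∈ I_ν = [1, 1 + 1/|a|], one has | ∫₀¹ t^β·(t−1)^β · ((d/dξ)^{2β} g′)(1 + t(ξ−1)) dt | ≥ |a|^{2β+1} / C, where g′ denotes the derivative of g and (d/dξ)^{2β} the 2β-fold derivative; equivalently, since q ≡ 1 on I_ν and 1 + t(ξ−1) ∈ I_ν, the integrand equals ∏_{l=0}^{2β} (ν+1−l) · (1 + t(ξ−1))^{ν−2β}. -/
open Complex intervalIntegral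

lemma hasDerivAt_ofReal_cpow' {s : ℂ} (hs : s ≠ 0) {x : ℝ} (hx : x ≠ 0) :
    HasDerivAt (fun y : ℝ => (y:ℂ) ^ s) (s * (x:ℂ) ^ (s - 1)) x := by
  have hr : s - 1 ≠ -1 := by
    intro h; apply hs; have := congrArg (· + 1) h; simpa using this
  have h := (hasDerivAt_ofReal_cpow_const' hx hr).const_mul s
  have h1 : s - 1 + 1 = s := by ring
  rw [h1] at h
  have h2 : (fun y : ℝ => s * ((y:ℂ) ^ s / s)) = fun y : ℝ => (y:ℂ) ^ s := by
    funext y; rw [mul_div_cancel₀ _ hs]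
  rwa [h2] at h

lemma iter_deriv_cpow (c : ℂ) (hc : c.im ≠ 0) (n : ℕ) :
    ∀ x ∈ Set.Ioi (0:ℝ), deriv^[n] (fun y : ℝ => (y:ℂ) ^ c) x
      = (∏ l ∈ Finset.range n, (c - l)) * (x:ℂ) ^ (c - n) := by
  induction n with
  | zero => intro x _; simp
  | succ n ih =>
    intro x hx
    have hx0 : (0:ℝ) < x := hx
    rw [Function.iterate_succ_apply']
    have hev : deriv^[n] (fun y : ℝ => (y:ℂ) ^ c)
        =ᶠ[nhds x] (fun y : ℝ => (∏ l ∈ Finset.range n, (c - l)) * (y:ℂ) ^ (c - n)) := by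
      filter_upwards [eventually_gt_nhds hx0] with y hy
      exact ih y hy
    rw [hev.deriv_eq]
    have hs : (c - n : ℂ) ≠ 0 := by
      intro h
      have := congrArg Complex.im h
      simp at this; exact hc this
    have hd := (hasDerivAt_ofReal_cpow' hs hx0.ne').const_mul
      (∏ l ∈ Finset.range n, (c - l))
    rw [hd.deriv]
    rw [Finset.prod_range_succ]
    have : c - n - 1 = c - (n + 1 : ℕ) := by push_cast; ring
    rw [this]; ring

/-- n-th derivative of `H = x^c - 1` for `n ≥ 1`, `x > 0`. -/
lemma iter_deriv_H (c : ℂ) (hc : c.im ≠ 0) (n : ℕ) :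
    ∀ x ∈ Set.Ioi (0:ℝ), deriv^[n + 1] (fun y : ℝ => (y:ℂ) ^ c - 1) x
      = (∏ l ∈ Finset.range (n + 1), (c - l)) * (x:ℂ) ^ (c - (n + 1 : ℕ)) := by
  intro x hx
  have h1 : deriv (fun y : ℝ => (y:ℂ) ^ c - 1) = deriv (fun y : ℝ => (y:ℂ) ^ c) := by
    funext z; exact deriv_sub_const 1
  rw [Function.iterate_succ_apply, h1, ← Function.iterate_succ_apply]
  exact iter_deriv_cpow c hc (n + 1) x hx

lemma gfun_smooth (q : ℝ → ℂ) (a : ℝ) (hq : ContDiff ℝ (⊤ : ℕ∞) q)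
    (hsupp : Function.support q ⊆ Set.Icc (3 / 4 : ℝ) (4 / 3)) :
    ContDiff ℝ (⊤ : ℕ∞) (gfun q a) := by
  rw [contDiff_iff_contDiffAt]
  intro x
  rcases lt_or_ge x (3/4 : ℝ) with hx | hx
  · have hz : gfun q a =ᶠ[nhds x] (fun _ => 0) := by
      filter_upwards [eventually_lt_nhds hx] with y hy
      unfold gfun
      split_ifs with h
      · have : q y = 0 := by
          by_contra hqy
          exact absurd (hsupp hqy).1 (by linarith)
        simp [this]
      · rfl
    exact contDiffAt_const.congr_of_eventuallyEq hz
  · have hx0 : (0:ℝ) < x := by linarith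
    have hz : gfun q a =ᶠ[nhds x] (fun y => q y * ((y:ℂ) ^ (Complex.I * a + 1) - 1)) := by
      filter_upwards [eventually_gt_nhds hx0] with y hy
      simp [gfun, hy]
    refine ContDiffAt.congr_of_eventuallyEq ?_ hz
    have h1 : AnalyticAt ℂ (fun z : ℂ => z ^ (Complex.I * a + 1)) (x : ℂ) :=
      analyticAt_id.cpow analyticAt_const (Or.inl (by simpa using hx0))
    have h2 : ContDiffAt ℝ (⊤ : ℕ∞) (fun z : ℂ => z ^ (Complex.I * a + 1)) (x : ℂ) :=
      (h1.contDiffAt).restrict_scalars ℝ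
    exact (hq.contDiffAt).mul
      ((h2.comp x (Complex.ofRealCLM.contDiff.contDiffAt)).sub contDiffAt_const)

/-- Transfer: derivatives of gfun on [1, 5/4) equal the explicit formula. -/
lemma deriv_gfun_eq (q : ℝ → ℂ) (a : ℝ) (ha : a ≠ 0) (hq : ContDiff ℝ (⊤ : ℕ∞) q)
    (hsupp : Function.support q ⊆ Set.Icc (3 / 4 : ℝ) (4 / 3))
    (hone : Set.EqOn q 1 (Set.Icc (1 : ℝ) (5 / 4))) (n : ℕ) :
    ∀ y ∈ Set.Ico (1:ℝ) (5/4), deriv^[n + 1] (gfun q a) y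
      = (∏ l ∈ Finset.range (n + 1), (Complex.I * a + 1 - l)) *
          (y:ℂ) ^ (Complex.I * a + 1 - (n + 1 : ℕ)) := by
  set c : ℂ := Complex.I * a + 1 with hc
  have hcim : c.im ≠ 0 := by
    simp [hc, Complex.add_im, Complex.mul_im]
    exact ha
  have hopen : ∀ y ∈ Set.Ioo (1:ℝ) (5/4), deriv^[n + 1] (gfun q a) y
      = (∏ l ∈ Finset.range (n + 1), (c - l)) * (y:ℂ) ^ (c - (n + 1 : ℕ)) := by
    intro y hy
    have hyo : Set.Ioo (1:ℝ) (5/4) ∈ nhds y := (isOpen_Ioo).mem_nhds hy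
    have hev : gfun q a =ᶠ[nhds y] (fun z : ℝ => (z:ℂ) ^ c - 1) := by
      filter_upwards [hyo] with z hz
      have hz0 : (0:ℝ) < z := by linarith [hz.1]
      have hq1 : q z = 1 := hone ⟨hz.1.le, hz.2.le⟩
      simp [gfun, hz0, hq1, hc]
    have hiter : deriv^[n+1] (gfun q a) =ᶠ[nhds y] deriv^[n+1] (fun z : ℝ => (z:ℂ) ^ c - 1) := by
      induction (n+1) with
      | zero => exact hev
      | succ m ihm => rw [Function.iterate_succ_apply', Function.iterate_succ_apply']
                      exact ihm.deriv
    rw [hiter.self_of_nhds]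
    exact iter_deriv_H c hcim n y (by simp; linarith [hy.1])
  intro y hy
  rcases eq_or_lt_of_le hy.1 with h1 | h1
  · subst h1
    have hcont : Continuous (deriv^[n+1] (gfun q a)) :=
      (ContDiff.iterate_deriv (n+1) (gfun_smooth q a hq hsupp)).continuous
    have hF : ContinuousAt (fun z : ℝ =>
        (∏ l ∈ Finset.range (n + 1), (c - l)) * (z:ℂ) ^ (c - (n + 1 : ℕ))) 1 :=
      continuousAt_const.mul (continuousAt_ofReal_cpow_const 1 _ (Or.inr one_ne_zero))
    have hne : (nhdsWithin (1:ℝ) (Set.Ioo (1:ℝ) (5/4))).NeBot := by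
      apply mem_closure_iff_nhdsWithin_neBot.mp
      rw [closure_Ioo (by norm_num : (1:ℝ) ≠ 5/4)]
      exact ⟨le_refl 1, by norm_num⟩
    have h2 : Filter.Tendsto (deriv^[n+1] (gfun q a)) (nhdsWithin (1:ℝ) (Set.Ioo (1:ℝ) (5/4)))
        (nhds ((∏ l ∈ Finset.range (n + 1), (c - l)) * ((1:ℝ):ℂ) ^ (c - (n + 1 : ℕ)))) := by
      apply Filter.Tendsto.congr' _ hF.continuousWithinAt
      filter_upwards [self_mem_nhdsWithin] with z hz
      exact (hopen z hz).symm
    exact tendsto_nhds_unique (hcont.continuousAt.continuousWithinAt) h2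
  · exact hopen y ⟨h1, hy.2⟩

lemma re_cpow (a : ℝ) (β : ℕ) {x : ℝ} (hx : 0 < x) :
    ((x:ℂ) ^ (Complex.I * a + 1 - ((2*β+1 : ℕ) : ℂ))).re
      = (x ^ (2*β))⁻¹ * Real.cos (a * Real.log x) := by
  have hxne : (x:ℂ) ≠ 0 := ofReal_ne_zero.mpr hx.ne'
  rw [Complex.cpow_def_of_ne_zero hxne, ← Complex.ofReal_log hx.le]
  set L := Real.log x with hL
  have hz : ((L:ℂ) * (Complex.I * a + 1 - ((2*β+1 : ℕ) : ℂ))) =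
      Complex.mk (L * (-(2*β))) (L * a) := by
    apply Complex.ext <;> push_cast <;> simp <;> ring
  rw [hz, Complex.exp_re]
  simp only []
  have h1 : Real.exp (L * (-(2*β))) = (x ^ (2*β))⁻¹ := by
    rw [show L * (-(2*β:ℝ)) = -((2*β : ℕ) * L) by push_cast; ring, Real.exp_neg,
      Real.exp_nat_mul, hL, Real.exp_log hx]
  rw [h1, mul_comm L a]

/-- Lower bound for the main term. -/
theorem main_term_lower_bound (β : ℕ) (hβ : β ≠ 0) (q : ℝ → ℂ)
    (hq : ContDiff ℝ (⊤ : ℕ∞) q)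
    (hsupp : Function.support q ⊆ Set.Icc (3 / 4 : ℝ) (4 / 3))
    (hone : Set.EqOn q 1 (Set.Icc (1 : ℝ) (5 / 4))) :
    ∃ C > 4, ∀ a : ℝ, C ≤ |a| →
      ∀ ξ ∈ Set.Icc (1 : ℝ) (1 + 1 / |a|),
        |a| ^ (2 * β + 1) / C ≤
          ‖∫ t in (0 : ℝ)..1, (t : ℂ) ^ β * ((t : ℂ) - 1) ^ β *
              deriv^[2 * β] (deriv (gfun q a)) (1 + t * (ξ - 1))‖ := by
  -- the beta-type integral
  set b : ℝ := ∫ t in (0:ℝ)..1, t ^ β * (1 - t) ^ β with hbdef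
  have hbcont : Continuous (fun t : ℝ => t ^ β * (1 - t) ^ β) :=
    (continuous_pow β).mul ((continuous_const.sub continuous_id).pow β)
  have hbpos : 0 < b := by
    apply intervalIntegral_pos_of_pos_on (hbcont.intervalIntegrable 0 1) _ one_pos
    intro x hx
    exact mul_pos (pow_pos hx.1 β) (pow_pos (by linarith [hx.2]) β)
  set m : ℝ := ((5/4:ℝ) ^ (2*β))⁻¹ * Real.cos 1 with hmdef
  have hmpos : 0 < m := by
    have h := Real.cos_one_pos
    rw [hmdef]
    exact mul_pos (inv_pos.mpr (by positivity)) h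
  refine ⟨5 + (m * b)⁻¹, by have := inv_pos.mpr (mul_pos hmpos hbpos); linarith, ?_⟩
  intro a haC ξ hξ
  have hmb : 0 < m * b := mul_pos hmpos hbpos
  have ha5 : (5:ℝ) ≤ |a| := le_trans (by nlinarith [inv_pos.mpr hmb]) haC
  have ha0 : a ≠ 0 := by
    intro h; rw [h] at ha5; simp at ha5; linarith
  have hxmem : ∀ t ∈ Set.Icc (0:ℝ) 1, (1 + t*(ξ-1)) ∈ Set.Ico (1:ℝ) (5/4) := by
    intro t ht
    have h1 : (0:ℝ) ≤ ξ - 1 := by linarith [hξ.1]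
    have h2 : ξ - 1 ≤ 1/|a| := by linarith [hξ.2]
    have h3 : (1:ℝ)/|a| ≤ 1/5 := by
      apply one_div_le_one_div_of_le <;> linarith
    constructor
    · nlinarith [ht.1, ht.2]
    · nlinarith [ht.1, ht.2]
  set c : ℂ := Complex.I * a + 1 with hc
  set P : ℂ := ∏ l ∈ Finset.range (2*β+1), (c - l) with hP
  set w : ℂ := c - ((2*β+1 : ℕ) : ℂ) with hw
  set J : ℂ := ∫ t in (0:ℝ)..1, (t:ℂ) ^ β * ((t:ℂ) - 1) ^ β *
      ((1 + t*(ξ-1) : ℝ) : ℂ) ^ w with hJ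
  -- rewrite the integral
  have hcongr : (∫ t in (0:ℝ)..1, (t : ℂ) ^ β * ((t : ℂ) - 1) ^ β *
      deriv^[2 * β] (deriv (gfun q a)) (1 + t * (ξ - 1))) = P * J := by
    rw [hJ, ← intervalIntegral.integral_const_mul]
    apply intervalIntegral.integral_congr
    intro t ht
    rw [Set.uIcc_of_le (by norm_num : (0:ℝ) ≤ 1)] at ht
    beta_reduce
    have hd : deriv^[2*β] (deriv (gfun q a)) (1 + t*(ξ-1))
        = deriv^[2*β + 1] (gfun q a) (1 + t*(ξ-1)) := by
      rw [Function.iterate_succ_apply]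
    rw [hd, deriv_gfun_eq q a ha0 hq hsupp hone (2*β) _ (hxmem t ht)]
    ring
  rw [hcongr, norm_mul]
  -- lower bound for ‖P‖
  have hPbound : |a| ^ (2*β+1) ≤ ‖P‖ := by
    rw [hP]
    rw [show ‖∏ l ∈ Finset.range (2*β+1), (c - l)‖
        = ∏ l ∈ Finset.range (2*β+1), ‖c - l‖ from by
      rw [norm_prod]]
    calc |a| ^ (2*β+1) = ∏ _l ∈ Finset.range (2*β+1), |a| := by
          rw [Finset.prod_const, Finset.card_range]
      _ ≤ _ := by
          apply Finset.prod_le_prod (fun _ _ => abs_nonneg a)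
          intro l _
          have him : (c - (l:ℂ)).im = a := by simp [hc]
          calc |a| = |(c - (l:ℂ)).im| := by rw [him]
            _ ≤ ‖c - l‖ := Complex.abs_im_le_norm _
  -- lower bound for ‖J‖
  have hbase : Continuous (fun t : ℝ => 1 + t*(ξ-1)) :=
    continuous_const.add (continuous_id.mul continuous_const)
  have hxpos : ∀ t ∈ Set.Icc (0:ℝ) 1, (0:ℝ) < 1 + t*(ξ-1) := fun t ht => by
    linarith [(hxmem t ht).1]
  have hcpowC : ContinuousOn (fun t : ℝ => ((1 + t*(ξ-1) : ℝ) : ℂ) ^ w) (Set.Icc 0 1) := by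
    intro t ht
    have h1 : ContinuousAt (fun y : ℝ => ((y:ℂ)) ^ w) (1 + t*(ξ-1)) :=
      continuousAt_ofReal_cpow_const _ w (Or.inr (hxpos t ht).ne')
    have h2 := h1.comp (x := t) hbase.continuousAt
    exact h2.continuousWithinAt
  have hJint : IntervalIntegrable (fun t : ℝ => (t:ℂ) ^ β * ((t:ℂ) - 1) ^ β *
      ((1 + t*(ξ-1) : ℝ) : ℂ) ^ w) MeasureTheory.volume 0 1 := by
    apply ContinuousOn.intervalIntegrable
    rw [Set.uIcc_of_le (by norm_num : (0:ℝ) ≤ 1)]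
    exact (Continuous.continuousOn ((Complex.continuous_ofReal.pow β).mul
      ((Complex.continuous_ofReal.sub continuous_const).pow β))).mul hcpowC
  -- real part computation
  have hre : J.re = ∫ t in (0:ℝ)..1, ((t:ℂ) ^ β * ((t:ℂ) - 1) ^ β *
      ((1 + t*(ξ-1) : ℝ) : ℂ) ^ w).re := by
    have h := Complex.reCLM.intervalIntegral_comp_comm hJint
    simp only [Complex.reCLM_apply] at h
    rw [hJ]
    exact h.symm
  have hptwise : ∀ t ∈ Set.Icc (0:ℝ) 1, ((t:ℂ) ^ β * ((t:ℂ) - 1) ^ β *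
      ((1 + t*(ξ-1) : ℝ) : ℂ) ^ w).re
      = (-1:ℝ)^β * (t ^ β * (1-t) ^ β *
          (((1 + t*(ξ-1)) ^ (2*β))⁻¹ * Real.cos (a * Real.log (1 + t*(ξ-1))))) := by
    intro t ht
    have h1 : (t:ℂ) ^ β * ((t:ℂ) - 1) ^ β = ((t ^ β * (t-1) ^ β : ℝ) : ℂ) := by push_cast; ring
    rw [h1, Complex.re_ofReal_mul, hw, hc, re_cpow a β (hxpos t ht)]
    have h2 : t ^ β * (t-1) ^ β = (-1:ℝ)^β * (t ^ β * (1-t) ^ β) := by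
      rw [show (t-1 : ℝ) = (-1) * (1 - t) by ring, mul_pow]; ring
    rw [h2]; ring
  have hre2 : J.re = (-1:ℝ)^β * ∫ t in (0:ℝ)..1, t ^ β * (1-t) ^ β *
      (((1 + t*(ξ-1)) ^ (2*β))⁻¹ * Real.cos (a * Real.log (1 + t*(ξ-1)))) := by
    rw [hre, ← intervalIntegral.integral_const_mul]
    apply intervalIntegral.integral_congr
    intro t ht
    rw [Set.uIcc_of_le (by norm_num : (0:ℝ) ≤ 1)] at ht
    exact hptwise t ht
  -- lower bound ∫ G ≥ m * b
  set G : ℝ → ℝ := fun t => t ^ β * (1-t) ^ β *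
      (((1 + t*(ξ-1)) ^ (2*β))⁻¹ * Real.cos (a * Real.log (1 + t*(ξ-1)))) with hG
  have hlogC : ContinuousOn (fun t : ℝ => Real.log (1 + t*(ξ-1))) (Set.Icc 0 1) :=
    ContinuousOn.log hbase.continuousOn (fun t ht => (hxpos t ht).ne')
  have hGcont : ContinuousOn G (Set.Icc 0 1) := by
    apply ContinuousOn.mul hbcont.continuousOn
    apply ContinuousOn.mul
    · exact ContinuousOn.inv₀ (hbase.pow (2*β)).continuousOn
        (fun t ht => pow_ne_zero _ (hxpos t ht).ne')
    · exact Real.continuous_cos.comp_continuousOn (continuousOn_const.mul hlogC)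
  have hGlower : ∀ t ∈ Set.Icc (0:ℝ) 1, m * (t ^ β * (1-t) ^ β) ≤ G t := by
    intro t ht
    have hx1 : (1:ℝ) ≤ 1 + t*(ξ-1) := (hxmem t ht).1
    have hx2 : 1 + t*(ξ-1) ≤ 5/4 := (hxmem t ht).2.le
    have hL0 : 0 ≤ Real.log (1 + t*(ξ-1)) := Real.log_nonneg hx1
    have hξ1 : (0:ℝ) ≤ ξ - 1 := by linarith [hξ.1]
    have hL1 : Real.log (1 + t*(ξ-1)) ≤ 1/|a| := by
      have h1 := Real.log_le_sub_one_of_pos (hxpos t ht)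
      have h2 : t*(ξ-1) ≤ 1/|a| := by
        have : t*(ξ-1) ≤ 1*(ξ-1) := mul_le_mul_of_nonneg_right ht.2 hξ1
        have h3 : ξ - 1 ≤ 1/|a| := by linarith [hξ.2]
        linarith
      linarith
    have hapos : (0:ℝ) < |a| := by linarith
    have hcosb : Real.cos 1 ≤ Real.cos (a * Real.log (1 + t*(ξ-1))) := by
      have habs : |a * Real.log (1 + t*(ξ-1))| ≤ 1 := by
        rw [abs_mul, _root_.abs_of_nonneg hL0]
        calc |a| * Real.log (1 + t*(ξ-1)) ≤ |a| * (1/|a|) :=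
              mul_le_mul_of_nonneg_left hL1 (abs_nonneg a)
          _ = 1 := by field_simp
      calc Real.cos 1 ≤ Real.cos |a * Real.log (1 + t*(ξ-1))| :=
            Real.cos_le_cos_of_nonneg_of_le_pi (abs_nonneg _)
              (by linarith [Real.pi_gt_three]) habs
        _ = Real.cos (a * Real.log (1 + t*(ξ-1))) := Real.cos_abs _
    have hinv : ((5/4:ℝ) ^ (2*β))⁻¹ ≤ ((1 + t*(ξ-1)) ^ (2*β))⁻¹ := by
      apply inv_anti₀ (by positivity)
      exact pow_le_pow_left₀ (by linarith) hx2 _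
    have hfac : m ≤ ((1 + t*(ξ-1)) ^ (2*β))⁻¹ * Real.cos (a * Real.log (1 + t*(ξ-1))) := by
      rw [hmdef]
      exact mul_le_mul hinv hcosb Real.cos_one_pos.le (by positivity)
    have hψ : 0 ≤ t ^ β * (1-t) ^ β := by
      have h1 := ht.1; have h2 := ht.2
      apply mul_nonneg (pow_nonneg h1 β) (pow_nonneg (by linarith) β)
    rw [hG]
    beta_reduce
    nlinarith [hfac, hψ]
  have hGint : IntervalIntegrable G MeasureTheory.volume 0 1 := by
    apply ContinuousOn.intervalIntegrable
    rwa [Set.uIcc_of_le (by norm_num : (0:ℝ) ≤ 1)]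
  have hmono : m * b ≤ ∫ t in (0:ℝ)..1, G t := by
    rw [hbdef, ← intervalIntegral.integral_const_mul]
    apply intervalIntegral.integral_mono_on (by norm_num : (0:ℝ) ≤ 1)
      ((continuous_const.mul hbcont).intervalIntegrable 0 1) hGint hGlower
  have hJlower : m * b ≤ ‖J‖ := by
    calc m * b ≤ ∫ t in (0:ℝ)..1, G t := hmono
      _ ≤ |∫ t in (0:ℝ)..1, G t| := le_abs_self _
      _ = |J.re| := by
          rw [hre2, abs_mul, _root_.abs_pow, abs_neg, abs_one, one_pow, one_mul]
      _ ≤ ‖J‖ := by exact Complex.abs_re_le_norm J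
  -- conclusion
  have hCpos : (0:ℝ) < 5 + (m*b)⁻¹ := by positivity
  have h1C : 1/(5 + (m*b)⁻¹) ≤ m*b := by
    rw [div_le_iff₀ hCpos]
    have h2 : (m*b) * (m*b)⁻¹ = 1 := mul_inv_cancel₀ hmb.ne'
    nlinarith
  calc |a| ^ (2*β+1) / (5 + (m*b)⁻¹) = |a| ^ (2*β+1) * (1/(5 + (m*b)⁻¹)) := by
        rw [div_eq_mul_one_div]
    _ ≤ ‖P‖ * (m*b) := mul_le_mul hPbound h1C (by positivity)
        (le_trans (by positivity) hPbound)
    _ ≤ ‖P‖ * ‖J‖ := mul_le_mul_of_nonneg_left hJlower (norm_nonneg _)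
end

section
/- For every β ∈ ℕ and every fixed q ∈ C_c^∞(ℝ) with support contained in [3/4, 4/3] and q ≡ 1 on [1, 5/4], there exist constants c > 4 and C > 0 such that the following holds. Let λ be a nonzero real number, let a be real with |a| ≥ c, set ν = ia, define g(ξ) = q(ξ)·(ξ^{ν+1} − 1) for ξ > 0 (and g = 0 for ξ ≤ 0), and define f(ξ) = −i·g(ξ)/(λ(ξ − 1)) for ξ ≠ 1, extended smoothly at ξ = 1 (this is possible since g(1) = 0). Then ‖Û^β f‖_{L²(I_ν)} ≥ (C/|λ|)·|a|^{2β + 1/2}, where I_ν = [1, 1 + 1/|a|] and the L² norm is with respect to Lebesgue measure. -/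
set_option maxHeartbeats 1000000

open Complex MeasureTheory

/-- The `L²(J, dξ)` norm (Lebesgue measure), valued in `ℝ≥0∞`. -/
noncomputable def L2 (h : ℝ → ℂ) (J : Set ℝ) : ENNReal :=
  (∫⁻ ξ in J, ENNReal.ofReal (‖h ξ‖ ^ 2)) ^ (1 / 2 : ℝ)

/-- The solution `f(ξ) = −i·g(ξ)/(λ(ξ−1))`, extended smoothly at `ξ = 1`. -/
noncomputable def ffun (q : ℝ → ℂ) (a lam : ℝ) : ℝ → ℂ :=
  fun ξ => if ξ = 1 then -Complex.I * deriv (gfun q a) 1 / (lam : ℂ)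
    else -Complex.I * gfun q a ξ / ((lam : ℂ) * ((ξ : ℂ) - 1))

namespace TwistedAux

noncomputable def Gint (p : ℝ → ℂ) (s : ℂ) (x : ℝ) : ℂ :=
  ∫ τ in (0:ℝ)..1, p τ * (((1 + τ * (x - 1) : ℝ)) : ℂ) ^ s

lemma bpos {x τ : ℝ} (hx1 : 1/2 < x) (hx2 : x < 3/2) (hτ1 : 0 ≤ τ) (hτ2 : τ ≤ 1) :
    0 < 1 + τ * (x - 1) := by nlinarith

lemma bge_half {x τ : ℝ} (hx1 : 1/2 < x) (hx2 : x < 3/2) (hτ1 : 0 ≤ τ) (hτ2 : τ ≤ 1) :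
    1/2 ≤ 1 + τ * (x - 1) := by nlinarith

lemma ble_two {x τ : ℝ} (hx1 : 1/2 < x) (hx2 : x < 3/2) (hτ1 : 0 ≤ τ) (hτ2 : τ ≤ 1) :
    1 + τ * (x - 1) ≤ 2 := by nlinarith

lemma contOn_integrand (p : ℝ → ℂ) (hp : Continuous p) (s : ℂ) {x : ℝ}
    (hx1 : 1/2 < x) (hx2 : x < 3/2) :
    ContinuousOn (fun τ : ℝ => p τ * (((1 + τ * (x - 1) : ℝ)) : ℂ) ^ s) (Set.Icc 0 1) := by
  intro τ hτ
  refine ContinuousWithinAt.mul hp.continuousWithinAt ?_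
  have hb : (0:ℝ) < 1 + τ * (x - 1) := bpos hx1 hx2 hτ.1 hτ.2
  have h0 : ContinuousAt (fun τ : ℝ => ((1 + τ * (x - 1) : ℝ) : ℂ)) τ :=
    (Complex.continuous_ofReal.comp (by continuity)).continuousAt
  have hc : ContinuousAt (fun τ : ℝ => (((1 + τ * (x - 1) : ℝ)) : ℂ) ^ s) τ :=
    h0.cpow continuousAt_const (Complex.ofReal_mem_slitPlane.2 hb)
  exact hc.continuousWithinAt

lemma uIcc01 : Set.uIcc (0:ℝ) 1 = Set.Icc 0 1 := Set.uIcc_of_le (by norm_num)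

lemma uIoc01 : Set.uIoc (0:ℝ) 1 = Set.Ioc 0 1 := Set.uIoc_of_le (by norm_num)

lemma integrable_integrand (p : ℝ → ℂ) (hp : Continuous p) (s : ℂ) {x : ℝ}
    (hx1 : 1/2 < x) (hx2 : x < 3/2) :
    IntervalIntegrable (fun τ : ℝ => p τ * (((1 + τ * (x - 1) : ℝ)) : ℂ) ^ s) volume 0 1 := by
  refine ContinuousOn.intervalIntegrable ?_
  rw [uIcc01]; exact contOn_integrand p hp s hx1 hx2

lemma cpow_norm_le {b : ℝ} (hb1 : 1/2 ≤ b) (hb2 : b ≤ 2) (s : ℂ) :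
    ‖((b : ℝ) : ℂ) ^ s‖ ≤ 2 ^ |s.re| := by
  rw [Complex.norm_cpow_eq_rpow_re_of_pos (by linarith)]
  rcases le_or_gt 0 s.re with h | h
  · rw [_root_.abs_of_nonneg h]
    exact Real.rpow_le_rpow (by linarith) hb2 h
  · rw [_root_.abs_of_neg h]
    calc b ^ s.re ≤ (2⁻¹ : ℝ) ^ s.re := by
          refine Real.rpow_le_rpow_of_nonpos (by norm_num) (by linarith) h.le
      _ = 2 ^ (-s.re) := by
          rw [Real.inv_rpow (by norm_num), ← Real.rpow_neg (by norm_num)]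

lemma hasDerivAt_Gint (p : ℝ → ℂ) (hp : Continuous p) (s : ℂ) (hs : s ≠ 0) {x₀ : ℝ}
    (h1 : 1/2 < x₀) (h2 : x₀ < 3/2) :
    HasDerivAt (fun x => Gint p s x) (Gint (fun τ => p τ * (s * τ)) (s - 1) x₀) x₀ := by
  obtain ⟨M, hM⟩ := (isCompact_Icc : IsCompact (Set.Icc (0:ℝ) 1)).exists_bound_of_continuousOn
    hp.continuousOn
  have hM0 : 0 ≤ M := le_trans (norm_nonneg _) (hM 0 ⟨le_refl _, by norm_num⟩)
  have hε0 : 0 < min (x₀ - 1/2) (3/2 - x₀) := by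
    apply lt_min <;> linarith
  have hball : ∀ x ∈ Metric.ball x₀ (min (x₀ - 1/2) (3/2 - x₀)), 1/2 < x ∧ x < 3/2 := by
    intro x hx
    rw [Metric.mem_ball, Real.dist_eq] at hx
    have h' := abs_lt.1 hx
    have e1 := min_le_left (x₀ - 1/2) (3/2 - x₀)
    have e2 := min_le_right (x₀ - 1/2) (3/2 - x₀)
    constructor <;> linarith [h'.1, h'.2]
  have key := intervalIntegral.hasDerivAt_integral_of_dominated_loc_of_deriv_le
    (F := fun x τ => p τ * (((1 + τ * (x - 1) : ℝ)) : ℂ) ^ s)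
    (F' := fun x τ => p τ * (s * τ) * (((1 + τ * (x - 1) : ℝ)) : ℂ) ^ (s - 1))
    (bound := fun _ => M * (‖s‖ * 2 ^ |s.re - 1|)) (μ := volume) (a := 0) (b := 1) (x₀ := x₀)
    (Metric.ball_mem_nhds x₀ hε0) ?_ ?_ ?_ ?_ ?_ ?_
  · exact key.2
  · refine Filter.eventually_of_mem (Metric.ball_mem_nhds x₀ hε0) ?_
    intro x hx
    obtain ⟨hx1, hx2⟩ := hball x hx
    exact ((contOn_integrand p hp s hx1 hx2).mono (by rw [uIoc01]; exact Set.Ioc_subset_Icc_self)).aestronglyMeasurable measurableSet_uIoc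
  · exact integrable_integrand p hp s h1 h2
  · exact ((contOn_integrand _ (by continuity) (s-1) h1 h2).mono
      (by rw [uIoc01]; exact Set.Ioc_subset_Icc_self)).aestronglyMeasurable measurableSet_uIoc
  · refine Filter.Eventually.of_forall ?_
    intro τ hτ x hx
    obtain ⟨hx1, hx2⟩ := hball x hx
    rw [uIoc01] at hτ
    have hτ' : τ ∈ Set.Icc (0:ℝ) 1 := ⟨hτ.1.le, hτ.2⟩
    have hb1 := bge_half hx1 hx2 hτ'.1 hτ'.2
    have hb2 := ble_two hx1 hx2 hτ'.1 hτ'.2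
    calc ‖p τ * (s * τ) * (((1 + τ * (x - 1) : ℝ)) : ℂ) ^ (s - 1)‖
        = ‖p τ‖ * (‖s‖ * |τ|) * ‖(((1 + τ * (x - 1) : ℝ)) : ℂ) ^ (s - 1)‖ := by
          simp [norm_mul, Complex.norm_real, abs_mul]
      _ ≤ M * (‖s‖ * 1) * 2 ^ |s.re - 1| := by
          have h3 : ‖(((1 + τ * (x - 1) : ℝ)) : ℂ) ^ (s - 1)‖ ≤ 2 ^ |(s-1).re| :=
            cpow_norm_le hb1 hb2 (s - 1)
          have h4 : |(s-1).re| = |s.re - 1| := by simp [Complex.sub_re]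
          rw [h4] at h3
          have h5 : |τ| ≤ 1 := by rw [_root_.abs_of_nonneg hτ'.1]; exact hτ'.2
          have := hM τ hτ'
          gcongr <;> positivity
      _ = M * (‖s‖ * 2 ^ |s.re - 1|) := by ring
  · exact intervalIntegrable_const
  · refine Filter.Eventually.of_forall ?_
    intro τ hτ x hx
    obtain ⟨hx1, hx2⟩ := hball x hx
    rw [uIoc01] at hτ
    have hb : (0:ℝ) < 1 + τ * (x - 1) := bpos hx1 hx2 hτ.1.le hτ.2
    have inner : HasDerivAt (fun x : ℝ => 1 + τ * (x - 1)) τ x := by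
      simpa using (((hasDerivAt_id x).sub_const 1).const_mul τ).const_add 1
    have hs1 : s - 1 ≠ -1 := by
      intro h
      apply hs
      have := congrArg (· + 1) h
      simpa using this
    have outer0 := hasDerivAt_ofReal_cpow_const' (ne_of_gt hb) hs1
    rw [sub_add_cancel] at outer0
    have outer1 := outer0.const_mul s
    have keyf : (fun y : ℝ => s * ((y:ℂ) ^ s / s)) = fun y : ℝ => (y:ℂ) ^ s := by
      funext y; field_simp
    rw [keyf] at outer1
    have comp0 := HasDerivAt.scomp (x := x) outer1 inner
    simp only [Function.comp_def] at comp0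
    have comp := comp0.const_mul (p τ)
    refine comp.congr_deriv ?_
    rw [Complex.real_smul]
    push_cast
    ring


lemma im_ne_zero_ne (z : ℂ) (h : z.im ≠ 0) : z ≠ 0 := by
  intro h0; apply h; rw [h0]; simp

lemma nu_nat_ne {a : ℝ} (ha : a ≠ 0) (w : ℂ) (hw : w.im = 0) : Complex.I * a - w ≠ 0 := by
  apply im_ne_zero_ne; simp [hw, ha]

lemma nu_add_one_ne {a : ℝ} (ha : a ≠ 0) : Complex.I * a + 1 ≠ 0 := by
  apply im_ne_zero_ne; simp [ha]

lemma Gint_congr {p q : ℝ → ℂ} (h : ∀ τ ∈ Set.Icc (0:ℝ) 1, p τ = q τ) (s : ℂ) (x : ℝ) :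
    Gint p s x = Gint q s x := by
  refine intervalIntegral.integral_congr ?_
  rw [uIcc01]; intro τ hτ; dsimp only; rw [h τ hτ]

lemma Gint_zero (s : ℂ) (x : ℝ) : Gint (fun _ => 0) s x = 0 := by simp [Gint]

lemma Gint_add (p q : ℝ → ℂ) (hp : Continuous p) (hq : Continuous q) (s : ℂ) {x : ℝ}
    (hx1 : 1/2 < x) (hx2 : x < 3/2) :
    Gint (fun τ => p τ + q τ) s x = Gint p s x + Gint q s x := by
  simp only [Gint, add_mul]
  exact intervalIntegral.integral_add (integrable_integrand p hp s hx1 hx2)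
    (integrable_integrand q hq s hx1 hx2)

lemma Gint_const_mul (c : ℂ) (p : ℝ → ℂ) (s : ℂ) (x : ℝ) :
    Gint (fun τ => c * p τ) s x = c * Gint p s x := by
  simp only [Gint, mul_assoc]
  exact intervalIntegral.integral_const_mul c _

lemma deriv_congr_of_open {f g : ℝ → ℂ} {U : Set ℝ} (hU : IsOpen U) (h : ∀ y ∈ U, f y = g y)
    {x : ℝ} (hx : x ∈ U) : deriv f x = deriv g x :=
  Filter.EventuallyEq.deriv_eq (Filter.eventually_of_mem (hU.mem_nhds hx) h)

lemma hasDerivAt_Gsum (n : ℕ) (c : ℂ) (p : ℕ → ℝ → ℂ) (hp : ∀ m, Continuous (p m))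
    (s : ℕ → ℂ) (hs : ∀ m, m < n → s m ≠ 0) {x₀ : ℝ} (h1 : 1/2 < x₀) (h2 : x₀ < 3/2) :
    HasDerivAt (fun x => c * ∑ m ∈ Finset.range n, Gint (p m) (s m) x)
      (c * ∑ m ∈ Finset.range n, Gint (fun τ => p m τ * (s m * τ)) (s m - 1) x₀) x₀ :=
  (HasDerivAt.fun_sum (fun m hm =>
    hasDerivAt_Gint (p m) (hp m) (s m) (hs m (Finset.mem_range.1 hm)) h1 h2)).const_mul c

lemma Gint_one_eval {a : ℝ} (ha : a ≠ 0) {x : ℝ} (hx1 : 1 < x) (hx2 : x < 3/2) :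
    Gint (fun _ => 1) (Complex.I * a) x
      = ((x:ℂ) ^ (Complex.I * a + 1) - 1) / ((Complex.I * a + 1) * ((x:ℂ) - 1)) := by
  have hx1' : (1:ℝ)/2 < x := by linarith
  have hxc : ((x:ℂ) - 1) ≠ 0 := by
    have : ((x:ℂ) - 1) = ((x - 1 : ℝ) : ℂ) := by push_cast; ring
    rw [this]
    exact Complex.ofReal_ne_zero.2 (by linarith)
  have hν1 : (Complex.I * (a:ℂ)) ≠ -1 := by
    intro h
    apply ha
    have := congrArg Complex.im h
    simpa using this
  set F : ℝ → ℂ := fun τ =>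
    (((1 + τ * (x - 1) : ℝ)) : ℂ) ^ (Complex.I * a + 1) / (Complex.I * a + 1) / ((x:ℂ) - 1)
    with hF
  have hderiv : ∀ τ ∈ Set.uIcc (0:ℝ) 1,
      HasDerivAt F ((fun _ : ℝ => (1:ℂ)) τ * (((1 + τ * (x - 1) : ℝ)) : ℂ) ^ (Complex.I * a)) τ := by
    intro τ hτ
    rw [uIcc01] at hτ
    have hb : (0:ℝ) < 1 + τ * (x - 1) := bpos hx1' hx2 hτ.1 hτ.2
    have inner : HasDerivAt (fun τ : ℝ => 1 + τ * (x - 1)) (x - 1) τ := by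
      simpa using (hasDerivAt_mul_const (x - 1)).const_add 1
    have outer := hasDerivAt_ofReal_cpow_const' (ne_of_gt hb) hν1
    have comp := (HasDerivAt.scomp (x := τ) outer inner).div_const ((x:ℂ) - 1)
    simp only [Function.comp_def] at comp
    refine comp.congr_deriv ?_
    rw [Complex.real_smul]
    have hcast : ((x - 1 : ℝ) : ℂ) = (x:ℂ) - 1 := by push_cast; ring
    rw [hcast]
    field_simp
  have hint : IntervalIntegrable
      (fun τ : ℝ => (fun _ : ℝ => (1:ℂ)) τ * (((1 + τ * (x - 1) : ℝ)) : ℂ) ^ (Complex.I * a))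
      volume 0 1 := integrable_integrand _ continuous_const _ hx1' hx2
  have hcalc := intervalIntegral.integral_eq_sub_of_hasDerivAt hderiv hint
  have : Gint (fun _ => 1) (Complex.I * a) x = F 1 - F 0 := hcalc
  have hνp1 : (Complex.I * (a:ℂ) + 1) ≠ 0 := nu_add_one_ne ha
  rw [this, hF]
  norm_num
  field_simp


lemma hatU_term (ν mC : ℂ) (p : ℝ → ℂ) (hp : Continuous p) {x : ℝ}
    (hx1 : 1/2 < x) (hx2 : x < 3/2) :
    Complex.I * ((ν - 1) * Gint (fun τ => p τ * ((ν - mC) * τ)) (ν - mC - 1) x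
      - x * Gint (fun τ => p τ * ((ν - mC) * τ) * ((ν - mC - 1) * τ)) (ν - mC - 2) x)
    = Gint (fun τ => Complex.I * (ν - mC) * mC * τ * p τ) (ν - mC - 1) x
      + Gint (fun τ => Complex.I * (ν - mC) * (ν - mC - 1) * (τ * (1 - τ)) * p τ) (ν - mC - 2) x := by
  have c1 : Continuous (fun τ : ℝ => p τ * ((ν - mC) * τ)) := by
    apply hp.mul; exact continuous_const.mul Complex.continuous_ofReal
  have c2 : Continuous (fun τ : ℝ => p τ * ((ν - mC) * τ) * ((ν - mC - 1) * τ)) := by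
    apply c1.mul; exact continuous_const.mul Complex.continuous_ofReal
  have c3 : Continuous (fun τ : ℝ => Complex.I * (ν - mC) * mC * τ * p τ) := by
    apply Continuous.mul _ hp
    exact continuous_const.mul Complex.continuous_ofReal
  have c4 : Continuous (fun τ : ℝ => Complex.I * (ν - mC) * (ν - mC - 1) * (τ * (1 - τ)) * p τ) := by
    apply Continuous.mul _ hp
    apply continuous_const.mul
    exact Complex.continuous_ofReal.mul (by continuity)
  have h1 := (integrable_integrand _ c1 (ν - mC - 1) hx1 hx2).const_mul (ν - 1)
  have h2 := (integrable_integrand _ c2 (ν - mC - 2) hx1 hx2).const_mul ((x : ℝ) : ℂ)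
  have h3 := integrable_integrand _ c3 (ν - mC - 1) hx1 hx2
  have h4 := integrable_integrand _ c4 (ν - mC - 2) hx1 hx2
  simp only [Gint]
  rw [← intervalIntegral.integral_const_mul (ν - 1), ← intervalIntegral.integral_const_mul ((x:ℝ):ℂ),
      ← intervalIntegral.integral_sub h1 h2, ← intervalIntegral.integral_const_mul Complex.I,
      ← intervalIntegral.integral_add h3 h4]
  refine intervalIntegral.integral_congr ?_
  rw [uIcc01]
  intro τ hτ
  dsimp only
  have hb : (0:ℝ) < 1 + τ * (x - 1) := bpos hx1 hx2 hτ.1 hτ.2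
  have hB : (((1 + τ * (x - 1) : ℝ)) : ℂ) ≠ 0 := Complex.ofReal_ne_zero.2 (ne_of_gt hb)
  have hsplit : (((1 + τ * (x - 1) : ℝ)) : ℂ) ^ (ν - mC - 1)
      = (((1 + τ * (x - 1) : ℝ)) : ℂ) ^ (ν - mC - 2) * (((1 + τ * (x - 1) : ℝ)) : ℂ) := by
    have he : ν - mC - 1 = (ν - mC - 2) + 1 := by ring
    rw [he, Complex.cpow_add _ _ hB, Complex.cpow_one]
  have hcB : (((1 + τ * (x - 1) : ℝ)) : ℂ) = 1 + (τ:ℂ) * ((x:ℂ) - 1) := by push_cast; ring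
  rw [hsplit, hcB]
  ring


noncomputable def pstep (ν : ℂ) (p : ℕ → ℝ → ℂ) : ℕ → ℝ → ℂ := fun m τ =>
  if m < 2 then 0 else
    Complex.I * (ν - (m-1 : ℕ)) * ((m-1 : ℕ) : ℂ) * τ * p (m-1) τ
    + Complex.I * (ν - (m-2 : ℕ)) * (ν - ((m-2:ℕ):ℂ) - 1) * (τ * (1 - τ)) * p (m-2) τ

lemma pstep_cont (ν : ℂ) (p : ℕ → ℝ → ℂ) (hcont : ∀ m, Continuous (p m)) (m : ℕ) :
    Continuous (pstep ν p m) := by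
  show Continuous (fun τ : ℝ => if m < 2 then 0 else
    Complex.I * (ν - (m-1 : ℕ)) * ((m-1 : ℕ) : ℂ) * τ * p (m-1) τ
    + Complex.I * (ν - (m-2 : ℕ)) * (ν - ((m-2:ℕ):ℂ) - 1) * (τ * (1 - τ)) * p (m-2) τ)
  by_cases h : m < 2
  · simp only [if_pos h]; exact continuous_const
  · simp only [if_neg h]
    apply Continuous.add
    · exact (continuous_const.mul Complex.continuous_ofReal).mul (hcont (m-1))
    · exact (continuous_const.mul (Complex.continuous_ofReal.mul
        (continuous_const.sub Complex.continuous_ofReal))).mul (hcont (m-2))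

lemma step_form {a : ℝ} (ha : a ≠ 0) (c0 : ℂ) (n : ℕ) (p : ℕ → ℝ → ℂ)
    (hcont : ∀ m, Continuous (p m)) (hTop : p (n+1) = fun _ => 0) (f : ℝ → ℂ)
    (hform : ∀ y ∈ Set.Ioo (1:ℝ) (5/4), f y
      = c0 * ∑ m ∈ Finset.range (n+1), Gint (p m) (Complex.I*a - m) y) :
    ∀ x ∈ Set.Ioo (1:ℝ) (5/4), hatU (Complex.I*a) f x
      = c0 * ∑ m ∈ Finset.range (n+3),
          Gint (pstep (Complex.I*a) p m) (Complex.I*a - m) x := by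
  set ν : ℂ := Complex.I * a with hν
  have hs0 : ∀ m : ℕ, ν - (m:ℂ) ≠ 0 := fun m => nu_nat_ne ha _ (by simp)
  have hs1 : ∀ m : ℕ, ν - (m:ℂ) - 1 ≠ 0 := by
    intro m
    have he : ν - (m:ℂ) - 1 = ν - ((m:ℂ) + 1) := by ring
    rw [he]; exact nu_nat_ne ha _ (by simp)
  have hq1cont : ∀ m, Continuous (fun τ : ℝ => p m τ * ((ν - (m:ℂ)) * τ)) := fun m =>
    (hcont m).mul (continuous_const.mul Complex.continuous_ofReal)
  set G1 : ℝ → ℂ := fun y => c0 * ∑ m ∈ Finset.range (n+1),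
    Gint (fun τ => p m τ * ((ν - (m:ℂ)) * τ)) (ν - (m:ℂ) - 1) y with hG1def
  set G2 : ℝ → ℂ := fun y => c0 * ∑ m ∈ Finset.range (n+1),
    Gint (fun τ => (p m τ * ((ν - (m:ℂ)) * τ)) * ((ν - (m:ℂ) - 1) * τ)) (ν - (m:ℂ) - 1 - 1) y
    with hG2def
  have hG1 : ∀ y : ℝ, 1/2 < y → y < 3/2 →
      HasDerivAt (fun x => c0 * ∑ m ∈ Finset.range (n+1), Gint (p m) (ν - (m:ℂ)) x) (G1 y) y :=
    fun y h1 h2 => hasDerivAt_Gsum (n+1) c0 p hcont (fun m => ν - (m:ℂ)) (fun m _ => hs0 m) h1 h2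
  have hG2 : ∀ y : ℝ, 1/2 < y → y < 3/2 → HasDerivAt G1 (G2 y) y := fun y h1 h2 =>
    hasDerivAt_Gsum (n+1) c0 _ hq1cont (fun m => ν - (m:ℂ) - 1) (fun m _ => hs1 m) h1 h2
  intro x hx
  have hx1 : (1:ℝ) < x := hx.1
  have hv1 : (1:ℝ)/2 < x := by linarith
  have hv2 : x < 3/2 := by have := hx.2; linarith
  have hd1 : deriv f x = G1 x :=
    (deriv_congr_of_open isOpen_Ioo hform hx).trans (hG1 x hv1 hv2).deriv
  have hEq : ∀ y ∈ Set.Ioo (1:ℝ) (5/4), deriv f y = G1 y := by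
    intro y hy
    exact (deriv_congr_of_open isOpen_Ioo hform hy).trans
      (hG1 y (by linarith [hy.1]) (by linarith [hy.2])).deriv
  have hd2 : deriv (deriv f) x = G2 x :=
    (deriv_congr_of_open isOpen_Ioo hEq hx).trans (hG2 x hv1 hv2).deriv
  show Complex.I * ((ν - 1) * deriv f x - (x:ℂ) * deriv (deriv f) x) = _
  rw [hd1, hd2, hG1def, hG2def]
  -- abbreviations
  set X : ℕ → ℂ := fun m => Gint (fun τ => p m τ * ((ν - (m:ℂ)) * τ)) (ν - (m:ℂ) - 1) x with hX
  set Y : ℕ → ℂ := fun m =>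
    Gint (fun τ => (p m τ * ((ν - (m:ℂ)) * τ)) * ((ν - (m:ℂ) - 1) * τ)) (ν - (m:ℂ) - 1 - 1) x
    with hY
  set u : ℕ → ℂ := fun m =>
    Gint (fun τ => Complex.I * (ν - (m:ℂ)) * (m:ℂ) * τ * p m τ) (ν - (m:ℂ) - 1) x with hu
  set v : ℕ → ℂ := fun m =>
    Gint (fun τ => Complex.I * (ν - (m:ℂ)) * (ν - (m:ℂ) - 1) * (τ * (1 - τ)) * p m τ)
      (ν - (m:ℂ) - 2) x with hv
  have lhs1 : Complex.I * ((ν - 1) * (c0 * ∑ m ∈ Finset.range (n+1), X m)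
      - (x:ℂ) * (c0 * ∑ m ∈ Finset.range (n+1), Y m))
      = c0 * ∑ m ∈ Finset.range (n+1),
          Complex.I * ((ν - 1) * X m - (x:ℂ) * Y m) := by
    simp only [Finset.mul_sum, mul_sub, ← Finset.sum_sub_distrib]
    exact Finset.sum_congr rfl (fun m _ => by ring)
  have lhs2 : ∀ m ∈ Finset.range (n+1),
      Complex.I * ((ν - 1) * X m - (x:ℂ) * Y m) = u m + v m := by
    intro m _
    have he : ν - (m:ℂ) - 1 - 1 = ν - (m:ℂ) - 2 := by ring
    rw [hX, hY, hu, hv]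
    dsimp only
    rw [he]
    exact hatU_term ν (m:ℂ) (p m) (hcont m) hv1 hv2
  rw [lhs1, Finset.sum_congr rfl lhs2]
  congr 1
  -- now the reindexing
  have hT2 : ∀ i : ℕ, Gint (pstep ν p (i+2)) (ν - ((i+2:ℕ):ℂ)) x = u (i+1) + v i := by
    intro i
    have hni : ¬ (i+2 < 2) := by omega
    have e1 : i+2-1 = i+1 := by omega
    have e2 : i+2-2 = i := by omega
    have hrw : Gint (pstep ν p (i+2)) (ν - ((i+2:ℕ):ℂ)) x
        = Gint (fun τ => Complex.I * (ν - ((i+1:ℕ):ℂ)) * ((i+1:ℕ):ℂ) * τ * p (i+1) τ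
            + Complex.I * (ν - ((i:ℕ):ℂ)) * (ν - ((i:ℕ):ℂ) - 1) * (τ * (1 - τ)) * p i τ)
            (ν - ((i+2:ℕ):ℂ)) x := by
      refine Gint_congr (fun τ _ => ?_) _ _
      simp only [pstep, if_neg hni, e1, e2]
    rw [hrw, Gint_add (fun τ => Complex.I * (ν - ((i+1:ℕ):ℂ)) * ((i+1:ℕ):ℂ) * τ * p (i+1) τ)
      (fun τ => Complex.I * (ν - ((i:ℕ):ℂ)) * (ν - ((i:ℕ):ℂ) - 1) * (τ * (1 - τ)) * p i τ)
      ((continuous_const.mul Complex.continuous_ofReal).mul (hcont (i+1)))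
      ((continuous_const.mul (Complex.continuous_ofReal.mul
        (continuous_const.sub Complex.continuous_ofReal))).mul (hcont i)) _ hv1 hv2]
    have ea : ν - ((i+2:ℕ):ℂ) = ν - ((i+1:ℕ):ℂ) - 1 := by push_cast; ring
    have eb : ν - ((i+2:ℕ):ℂ) = ν - ((i:ℕ):ℂ) - 2 := by push_cast; ring
    rw [hu, hv]
    dsimp only
    congr 1
    · rw [ea]
    · rw [eb]
  have hu0 : u 0 = 0 := by
    rw [hu]
    dsimp only
    have : ∀ τ ∈ Set.Icc (0:ℝ) 1,
        Complex.I * (ν - ((0:ℕ):ℂ)) * ((0:ℕ):ℂ) * (τ:ℂ) * p 0 τ = (0:ℂ) := by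
      intro τ _; simp
    rw [Gint_congr this, Gint_zero]
  have huTop : u (n+1) = 0 := by
    rw [hu]
    dsimp only
    have : ∀ τ ∈ Set.Icc (0:ℝ) 1,
        Complex.I * (ν - ((n+1:ℕ):ℂ)) * ((n+1:ℕ):ℂ) * (τ:ℂ) * p (n+1) τ = (0:ℂ) := by
      intro τ _; rw [hTop]; simp
    rw [Gint_congr this, Gint_zero]
  have hT0 : Gint (pstep ν p 0) (ν - ((0:ℕ):ℂ)) x = 0 := by
    have : ∀ τ ∈ Set.Icc (0:ℝ) 1, pstep ν p 0 τ = (0:ℂ) := by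
      intro τ _; simp [pstep]
    rw [Gint_congr this, Gint_zero]
  have hT1 : Gint (pstep ν p 1) (ν - ((1:ℕ):ℂ)) x = 0 := by
    have : ∀ τ ∈ Set.Icc (0:ℝ) 1, pstep ν p 1 τ = (0:ℂ) := by
      intro τ _; simp [pstep]
    rw [Gint_congr this, Gint_zero]
  have esplit : (∑ i ∈ Finset.range (n+3), Gint (pstep ν p i) (ν - (i:ℂ)) x)
      = (∑ i ∈ Finset.range (n+1), Gint (pstep ν p (i+1+1)) (ν - ((i+1+1:ℕ):ℂ)) x)
        + Gint (pstep ν p (0+1)) (ν - ((0+1:ℕ):ℂ)) x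
        + Gint (pstep ν p 0) (ν - ((0:ℕ):ℂ)) x := by
    rw [Finset.sum_range_succ', Finset.sum_range_succ']
  have hT2' : ∀ i : ℕ, Gint (pstep ν p (i+1+1)) (ν - ((i+1+1:ℕ):ℂ)) x = u (i+1) + v i := by
    intro i
    have : i+1+1 = i+2 := by omega
    rw [this]
    exact hT2 i
  rw [esplit]
  have h01 : (0:ℕ)+1 = 1 := rfl
  rw [h01, hT0, hT1, add_zero, add_zero]
  rw [Finset.sum_congr rfl (fun i _ => hT2' i)]
  rw [Finset.sum_add_distrib, Finset.sum_add_distrib]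
  congr 1
  have e3 := Finset.sum_range_succ' u (n+1)
  have e4 := Finset.sum_range_succ u (n+1)
  rw [hu0, add_zero] at e3
  rw [huTop, add_zero] at e4
  rw [← e3, e4]


noncomputable def Kc : ℕ → ℝ := fun β => ∏ j ∈ Finset.range β, (4*(j:ℝ)+6)

noncomputable def zc (a : ℝ) : ℕ → ℂ := fun β => Complex.I^β *
  ∏ j ∈ Finset.range β, ((Complex.I * a - 2*j) * (Complex.I * a - 2*j - 1))

lemma Kc_pos (β : ℕ) : 0 < Kc β := by
  apply Finset.prod_pos; intro j _; positivity

lemma arith_bound (A Kb : ℝ) (β k : ℕ) (hk : (k:ℝ) ≤ 2*β) (hA : 2*(β:ℝ)+4 ≤ A)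
    (hKb : 0 < Kb) :
    (A + ((k:ℝ)+1)) * ((k:ℝ)+1) * (Kb * A^(k+1)) + (A + k) * (A + ((k:ℝ)+1)) * (Kb * A^k)
      ≤ (Kb * (4*(β:ℝ)+6)) * A^(k+2) := by
  have hβ0 : (0:ℝ) ≤ (β:ℝ) := Nat.cast_nonneg β
  have hk0 : (0:ℝ) ≤ (k:ℝ) := Nat.cast_nonneg k
  have hA0 : (0:ℝ) < A := by linarith
  have hpk : (0:ℝ) < A^k := pow_pos hA0 k
  have e1 : A^(k+1) = A^k * A := pow_succ A k
  have e2 : A^(k+2) = A^k * A * A := by rw [pow_succ, pow_succ]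
  rw [e1, e2]
  have h1 : A + ((k:ℝ)+1) ≤ 2*A := by linarith
  have h2 : (k:ℝ)+1 ≤ 2*(β:ℝ)+1 := by linarith
  have h3 : A + (k:ℝ) ≤ 2*A := by linarith
  have t1 : (A + ((k:ℝ)+1)) * ((k:ℝ)+1) * (Kb * (A^k * A))
      ≤ (2*A) * (2*(β:ℝ)+1) * (Kb * (A^k * A)) := by
    have hnn : (0:ℝ) ≤ Kb * (A^k * A) := by positivity
    have hfac : (A + ((k:ℝ)+1)) * ((k:ℝ)+1) ≤ (2*A) * (2*(β:ℝ)+1) := by nlinarith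
    nlinarith
  have t2 : (A + (k:ℝ)) * (A + ((k:ℝ)+1)) * (Kb * A^k)
      ≤ (2*A) * (2*A) * (Kb * A^k) := by
    have hnn : (0:ℝ) ≤ Kb * A^k := by positivity
    have hfac : (A + (k:ℝ)) * (A + ((k:ℝ)+1)) ≤ (2*A) * (2*A) := by nlinarith
    nlinarith
  nlinarith [t1, t2]

lemma key (q : ℝ → ℂ) (hone : Set.EqOn q 1 (Set.Icc (1:ℝ) (5/4)))
    {a lam : ℝ} (hlam : lam ≠ 0) (ha : a ≠ 0) :
    ∀ β : ℕ, (2*(β:ℝ) + 2 ≤ |a|) → ∃ p : ℕ → ℝ → ℂ,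
    (∀ m, Continuous (p m)) ∧
    (∀ m, 2*β < m → p m = fun _ => 0) ∧
    (∀ τ : ℝ, p (2*β) τ = ((τ^β * (1-τ)^β : ℝ) : ℂ) * zc a β) ∧
    (∀ m, ∀ τ ∈ Set.Icc (0:ℝ) 1, ‖p m τ‖ ≤ Kc β * |a|^m) ∧
    (∀ x ∈ Set.Ioo (1:ℝ) (5/4), (hatU (Complex.I * a))^[β] (ffun q a lam) x
      = (-Complex.I/lam) * (Complex.I*a+1) * ∑ m ∈ Finset.range (2*β+1),
          Gint (p m) (Complex.I*a - m) x) := by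
  intro β
  induction β with
  | zero =>
    intro _
    refine ⟨fun m => if m = 0 then (fun _ => (1:ℂ)) else (fun _ => 0), ?_, ?_, ?_, ?_, ?_⟩
    · intro m; by_cases h : m = 0 <;> simp [h] <;> exact continuous_const
    · intro m hm; have h : m ≠ 0 := by omega
      simp [h]
    · intro τ; simp [zc]
    · intro m τ hτ
      by_cases h : m = 0 <;> simp [h, Kc] <;> positivity
    · intro x hx
      have hx1 : (1:ℝ) < x := hx.1
      have hx2 : x < 3/2 := by have := hx.2; linarith
      have hxne : x ≠ 1 := ne_of_gt hx1
      have hx0 : (0:ℝ) < x := by linarith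
      have hq1 : q x = 1 := by
        have := hone ⟨hx1.le, hx.2.le⟩; simpa using this
      have hνp1 : (Complex.I * (a:ℂ) + 1) ≠ 0 := nu_add_one_ne ha
      have hxc : ((x:ℂ) - 1) ≠ 0 := by
        have h' : ((x:ℂ) - 1) = ((x - 1 : ℝ) : ℂ) := by push_cast; ring
        rw [h']; exact Complex.ofReal_ne_zero.2 (by linarith)
      have hlamc : ((lam:ℝ):ℂ) ≠ 0 := Complex.ofReal_ne_zero.2 hlam
      simp only [Function.iterate_zero, id_eq]
      rw [ffun]
      simp only [hxne, if_false]
      rw [gfun]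
      simp only [hx0, if_true, hq1, one_mul]
      have hsum : ∑ m ∈ Finset.range 1,
          Gint ((fun m => if m = 0 then (fun _ => (1:ℂ)) else (fun _ => 0)) m)
            (Complex.I*a - m) x
          = Gint (fun _ => 1) (Complex.I * a) x := by
        simp
      rw [hsum, Gint_one_eval ha hx1 hx2]
      field_simp
  | succ β ih =>
    intro hstep
    have hstep' : 2*(β:ℝ) + 4 ≤ |a| := by push_cast at hstep ⊢; linarith
    have hβa : 2*(β:ℝ) + 2 ≤ |a| := by linarith
    obtain ⟨p, hcont, hsupp, hmain, hbound, hform⟩ := ih hβa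
    refine ⟨pstep (Complex.I*a) p, pstep_cont _ p hcont, ?_, ?_, ?_, ?_⟩
    · intro m hm
      have h2 : ¬ m < 2 := by omega
      funext τ
      show (if m < 2 then 0 else _) = (0:ℂ)
      rw [if_neg h2, hsupp (m-1) (by omega), hsupp (m-2) (by omega)]
      simp
    · intro τ
      have h2 : ¬ (2*(β+1) < 2) := by omega
      have e1 : 2*(β+1) - 1 = 2*β+1 := by omega
      have e2 : 2*(β+1) - 2 = 2*β := by omega
      show (if 2*(β+1) < 2 then 0 else _) = _
      rw [if_neg h2, e1, e2, hsupp (2*β+1) (by omega), hmain τ]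
      have hz : zc a (β+1) = Complex.I * (Complex.I*a - ((2*β:ℕ):ℂ))
          * (Complex.I*a - ((2*β:ℕ):ℂ) - 1) * zc a β := by
        simp only [zc, Finset.prod_range_succ, pow_succ]
        push_cast
        ring
      rw [hz]
      push_cast
      ring
    · intro m τ hτ
      have hKb := Kc_pos β
      have hKb1 := Kc_pos (β+1)
      have habs1 : (1:ℝ) ≤ |a| := by linarith
      have hKsucc : Kc (β+1) = Kc β * (4*(β:ℝ)+6) := Finset.prod_range_succ _ β
      by_cases h : m < 2
      · show ‖(if m < 2 then 0 else _ : ℂ)‖ ≤ _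
        rw [if_pos h, norm_zero]
        positivity
      · obtain ⟨k, rfl⟩ : ∃ k, m = k + 2 := ⟨m - 2, by omega⟩
        have e1 : k + 2 - 1 = k + 1 := by omega
        have e2 : k + 2 - 2 = k := by omega
        show ‖(if k+2 < 2 then 0 else _ : ℂ)‖ ≤ _
        rw [if_neg h, e1, e2]
        by_cases hk : 2*β < k
        · rw [hsupp (k+1) (by omega), hsupp k (by omega)]
          simp only [mul_zero, add_zero, norm_zero]
          positivity
        · push_neg at hk
          have hkR : (k:ℝ) ≤ 2*(β:ℝ) := by exact_mod_cast hk
          have hb1 := hbound (k+1) τ hτ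
          have hb2 := hbound k τ hτ
          have hτa : ‖((τ:ℝ):ℂ)‖ ≤ 1 := by
            rw [Complex.norm_real, Real.norm_eq_abs]
            exact abs_le.2 ⟨by linarith [hτ.1], hτ.2⟩
          have hτb : ‖(τ:ℂ) * (1 - (τ:ℂ))‖ ≤ 1 := by
            rw [norm_mul]
            have h2' : ‖1 - (τ:ℂ)‖ ≤ 1 := by
              have he : (1:ℂ) - (τ:ℂ) = (((1 - τ:ℝ)):ℂ) := by push_cast; ring
              rw [he, Complex.norm_real, Real.norm_eq_abs]
              exact abs_le.2 ⟨by linarith [hτ.2], by linarith [hτ.1]⟩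
            calc ‖((τ:ℝ):ℂ)‖ * ‖1 - (τ:ℂ)‖ ≤ 1 * 1 := by gcongr
              _ = 1 := by ring
          have hνa : ‖(Complex.I * (a:ℂ))‖ = |a| := by
            rw [norm_mul, Complex.norm_I, one_mul, Complex.norm_real, Real.norm_eq_abs]
          have g2 : ‖Complex.I*(a:ℂ) - ((k+1:ℕ):ℂ)‖ ≤ |a| + ((k:ℝ)+1) := by
            refine le_trans (norm_sub_le _ _) ?_
            rw [hνa, Complex.norm_natCast]
            push_cast; linarith
          have g3 : ‖Complex.I*(a:ℂ) - ((k:ℕ):ℂ)‖ ≤ |a| + (k:ℝ) := by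
            refine le_trans (norm_sub_le _ _) ?_
            rw [hνa, Complex.norm_natCast]
          have g4 : ‖Complex.I*(a:ℂ) - ((k:ℕ):ℂ) - 1‖ ≤ |a| + ((k:ℝ)+1) := by
            refine le_trans (norm_sub_le _ _) ?_
            rw [norm_one]
            linarith
          have hna : ‖(((k+1:ℕ)):ℂ)‖ = (k:ℝ)+1 := by
            rw [Complex.norm_natCast]; push_cast; ring
          have hn1 : ‖Complex.I * (Complex.I*(a:ℂ) - ((k+1:ℕ):ℂ)) * ((k+1:ℕ) : ℂ) * (τ:ℂ)
                * p (k+1) τ‖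
              ≤ (|a| + ((k:ℝ)+1)) * ((k:ℝ)+1) * (Kc β * |a|^(k+1)) := by
            rw [norm_mul, norm_mul, norm_mul, norm_mul, Complex.norm_I, one_mul, hna]
            calc ‖Complex.I*(a:ℂ) - ((k+1:ℕ):ℂ)‖ * ((k:ℝ)+1) * ‖((τ:ℝ):ℂ)‖ * ‖p (k+1) τ‖
                ≤ (|a| + ((k:ℝ)+1)) * ((k:ℝ)+1) * 1 * (Kc β * |a|^(k+1)) := by
                  gcongr
              _ = (|a| + ((k:ℝ)+1)) * ((k:ℝ)+1) * (Kc β * |a|^(k+1)) := by ring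
          have hn2 : ‖Complex.I * (Complex.I*(a:ℂ) - ((k:ℕ):ℂ)) * (Complex.I*(a:ℂ) - ((k:ℕ):ℂ) - 1)
                * ((τ:ℂ) * (1 - (τ:ℂ))) * p k τ‖
              ≤ (|a| + (k:ℝ)) * (|a| + ((k:ℝ)+1)) * (Kc β * |a|^k) := by
            rw [norm_mul, norm_mul, norm_mul, norm_mul, Complex.norm_I, one_mul]
            calc ‖Complex.I*(a:ℂ) - ((k:ℕ):ℂ)‖ * ‖Complex.I*(a:ℂ) - ((k:ℕ):ℂ) - 1‖
                  * ‖(τ:ℂ) * (1 - (τ:ℂ))‖ * ‖p k τ‖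
                ≤ (|a| + (k:ℝ)) * (|a| + ((k:ℝ)+1)) * 1 * (Kc β * |a|^k) := by
                  gcongr
              _ = (|a| + (k:ℝ)) * (|a| + ((k:ℝ)+1)) * (Kc β * |a|^k) := by ring
          calc ‖Complex.I * (Complex.I*(a:ℂ) - ((k+1:ℕ):ℂ)) * ((k+1:ℕ) : ℂ) * (τ:ℂ) * p (k+1) τ
                + Complex.I * (Complex.I*(a:ℂ) - ((k:ℕ):ℂ)) * (Complex.I*(a:ℂ) - ((k:ℕ):ℂ) - 1)
                  * ((τ:ℂ) * (1 - (τ:ℂ))) * p k τ‖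
              ≤ ‖Complex.I * (Complex.I*(a:ℂ) - ((k+1:ℕ):ℂ)) * ((k+1:ℕ) : ℂ) * (τ:ℂ)
                  * p (k+1) τ‖
                + ‖Complex.I * (Complex.I*(a:ℂ) - ((k:ℕ):ℂ)) * (Complex.I*(a:ℂ) - ((k:ℕ):ℂ) - 1)
                  * ((τ:ℂ) * (1 - (τ:ℂ))) * p k τ‖ := norm_add_le _ _
            _ ≤ (|a| + ((k:ℝ)+1)) * ((k:ℝ)+1) * (Kc β * |a|^(k+1))
                + (|a| + (k:ℝ)) * (|a| + ((k:ℝ)+1)) * (Kc β * |a|^k) := by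
                  exact add_le_add hn1 hn2
            _ ≤ (Kc β * (4*(β:ℝ)+6)) * |a|^(k+2) :=
                  arith_bound |a| (Kc β) β k hkR hstep' hKb
            _ = Kc (β+1) * |a|^(k+2) := by rw [hKsucc]
    · intro x hx
      have hTop : p (2*β+1) = fun _ => 0 := hsupp _ (by omega)
      have hnext := step_form ha ((-Complex.I/lam) * (Complex.I*(a:ℂ)+1)) (2*β) p hcont hTop
        ((hatU (Complex.I*(a:ℂ)))^[β] (ffun q a lam)) hform x hx
      rw [Function.iterate_succ_apply']
      have hidx : 2*(β+1)+1 = 2*β+3 := by omega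
      rw [hidx]
      exact hnext

noncomputable def Bint (β : ℕ) : ℝ := ∫ τ in (0:ℝ)..1, τ^β*(1-τ)^β
noncomputable def kap (β : ℕ) : ℝ := Real.exp (-(β:ℝ)/2) * Real.cos 1


lemma Bint_pos (β : ℕ) : 0 < Bint β := by
  rw [Bint]
  have hcnt : Continuous fun τ : ℝ => τ^β*(1-τ)^β := by continuity
  refine intervalIntegral.intervalIntegral_pos_of_pos_on
    (hcnt.intervalIntegrable 0 1) ?_ (by norm_num)
  intro τ hτ
  have h1 := hτ.1
  have h2 : 0 < 1 - τ := by linarith [hτ.2]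
  positivity

lemma kap_pos (β : ℕ) : 0 < kap β := mul_pos (Real.exp_pos _) Real.cos_one_pos

lemma zc_norm_ge (a : ℝ) (β : ℕ) : |a|^(2*β) ≤ ‖zc a β‖ := by
  have h1 : ‖zc a β‖ = ∏ j ∈ Finset.range β,
      (‖Complex.I * a - 2*j‖ * ‖Complex.I * a - 2*j - 1‖) := by
    rw [zc, norm_mul, norm_pow, Complex.norm_I, one_pow, one_mul, norm_prod]
    exact Finset.prod_congr rfl (fun j _ => norm_mul _ _)
  rw [h1]
  have h2 : |a|^(2*β) = ∏ _j ∈ Finset.range β, (|a| * |a|) := by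
    rw [Finset.prod_const, Finset.card_range, two_mul, pow_add, ← mul_pow]
  rw [h2]
  refine Finset.prod_le_prod (fun j _ => by positivity) ?_
  intro j _
  have him1 : |a| ≤ ‖Complex.I * (a:ℂ) - 2*(j:ℂ)‖ := by
    have he : (Complex.I * (a:ℂ) - 2*(j:ℂ)).im = a := by simp
    calc |a| = |(Complex.I * (a:ℂ) - 2*(j:ℂ)).im| := by rw [he]
      _ ≤ ‖Complex.I * (a:ℂ) - 2*(j:ℂ)‖ := Complex.abs_im_le_norm _
      _ = ‖Complex.I * (a:ℂ) - 2*(j:ℂ)‖ := rfl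
  have him2 : |a| ≤ ‖Complex.I * (a:ℂ) - 2*(j:ℂ) - 1‖ := by
    have he : (Complex.I * (a:ℂ) - 2*(j:ℂ) - 1).im = a := by simp
    calc |a| = |(Complex.I * (a:ℂ) - 2*(j:ℂ) - 1).im| := by rw [he]
      _ ≤ ‖Complex.I * (a:ℂ) - 2*(j:ℂ) - 1‖ := Complex.abs_im_le_norm _
      _ = ‖Complex.I * (a:ℂ) - 2*(j:ℂ) - 1‖ := rfl
  exact mul_le_mul him1 him2 (abs_nonneg a) (norm_nonneg _)

lemma re_cpow_ge {b : ℝ} (hb1 : 1 ≤ b) (hb2 : b ≤ 5/4) {a : ℝ}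
    (hab : Real.log b * |a| ≤ 1) (β : ℕ) :
    kap β ≤ (((b:ℝ):ℂ) ^ (Complex.I*a - ((2*β:ℕ):ℂ))).re := by
  have hb0 : (0:ℝ) < b := by linarith
  have hL0 : 0 ≤ Real.log b := Real.log_nonneg hb1
  have hL4 : Real.log b ≤ 1/4 := le_trans (Real.log_le_sub_one_of_pos hb0) (by linarith)
  have hre : (((b:ℝ):ℂ) ^ (Complex.I*a - ((2*β:ℕ):ℂ))).re
      = Real.exp (Real.log b * (-(2*(β:ℝ)))) * Real.cos (Real.log b * a) := by
    rw [Complex.cpow_def_of_ne_zero (Complex.ofReal_ne_zero.2 (ne_of_gt hb0))]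
    rw [← Complex.ofReal_log hb0.le, Complex.exp_re]
    have hre2 : ((Real.log b : ℂ) * (Complex.I*a - ((2*β:ℕ):ℂ))).re
        = Real.log b * (-(2*(β:ℝ))) := by
      simp only [Complex.mul_re, Complex.sub_re, Complex.sub_im, Complex.mul_im,
        Complex.ofReal_re, Complex.ofReal_im, Complex.natCast_re, Complex.natCast_im,
        Complex.I_re, Complex.I_im]
      push_cast
      ring
    have him2 : ((Real.log b : ℂ) * (Complex.I*a - ((2*β:ℕ):ℂ))).im
        = Real.log b * a := by
      simp [Complex.mul_im, Complex.sub_re, Complex.sub_im]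
    rw [hre2, him2]
  rw [hre]
  have hcos : Real.cos 1 ≤ Real.cos (Real.log b * a) := by
    have habs : |Real.log b * a| ≤ 1 := by
      rw [abs_mul, _root_.abs_of_nonneg hL0]
      exact hab
    have h1pi : (1:ℝ) ≤ Real.pi := by linarith [Real.pi_gt_three]
    have := Real.cos_le_cos_of_nonneg_of_le_pi (abs_nonneg (Real.log b * a)) h1pi habs
    rwa [Real.cos_abs] at this
  have hexp : Real.exp (-(β:ℝ)/2) ≤ Real.exp (Real.log b * (-(2*(β:ℝ)))) := by
    rw [Real.exp_le_exp]
    have hβ0 : (0:ℝ) ≤ (β:ℝ) := Nat.cast_nonneg β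
    nlinarith
  exact mul_le_mul hexp hcos Real.cos_one_pos.le (Real.exp_pos _).le

lemma pointwise_bound (β : ℕ) (q : ℝ → ℂ) (hone : Set.EqOn q 1 (Set.Icc (1:ℝ) (5/4)))
    {a lam : ℝ} (hlam : lam ≠ 0) (ha4 : 4 < |a|)
    (hβa : 2*(β:ℝ)+2 ≤ |a|) (hErr : 2*(β:ℝ)*Kc β ≤ (kap β * Bint β/2)*|a|) :
    ∀ x ∈ Set.Ioo (1:ℝ) (1+1/|a|),
      (kap β * Bint β/2) * |a|^(2*β+1) / |lam|
        ≤ ‖(hatU (Complex.I*a))^[β] (ffun q a lam) x‖ := by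
  have ha : a ≠ 0 := by intro h; rw [h] at ha4; simp at ha4; linarith
  have hapos : (0:ℝ) < |a| := by linarith
  obtain ⟨p, hcont, hsupp, hmain, hbound, hform⟩ := key q hone hlam ha β hβa
  intro x hx
  have hx1 : (1:ℝ) < x := hx.1
  have hxa : x < 1 + 1/|a| := hx.2
  have hia : 1/|a| ≤ 1/4 := by
    rw [div_le_div_iff₀ hapos (by norm_num)]; linarith
  have hx54 : x < 5/4 := by linarith
  have hxU : x ∈ Set.Ioo (1:ℝ) (5/4) := ⟨hx1, hx54⟩
  have hv1 : (1:ℝ)/2 < x := by linarith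
  have hv2 : x < 3/2 := by linarith
  rw [hform x hxU]
  -- decompose the sum
  set S := ∑ m ∈ Finset.range (2*β+1), Gint (p m) (Complex.I*a - m) x with hS
  set E := ∑ m ∈ Finset.range (2*β), Gint (p m) (Complex.I*a - m) x with hE
  set T := Gint (p (2*β)) (Complex.I*a - ((2*β:ℕ):ℂ)) x with hT
  have hsplit : S = E + T := Finset.sum_range_succ _ (2*β)
  -- bound on E
  have hEbound : ‖E‖ ≤ (2*(β:ℝ)) * (Kc β * (|a|^(2*β) / |a|)) := by
    have hterm : ∀ m ∈ Finset.range (2*β),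
        ‖Gint (p m) (Complex.I*a - m) x‖ ≤ Kc β * (|a|^(2*β) / |a|) := by
      intro m hm
      have hmlt : m < 2*β := Finset.mem_range.1 hm
      have hGb : ‖Gint (p m) (Complex.I*a - m) x‖ ≤ (Kc β * |a|^m) * |1 - 0| := by
        refine intervalIntegral.norm_integral_le_of_norm_le_const ?_
        intro τ hτ
        rw [Set.uIoc_of_le (by norm_num : (0:ℝ) ≤ 1)] at hτ
        have hτ' : τ ∈ Set.Icc (0:ℝ) 1 := ⟨hτ.1.le, hτ.2⟩
        have hb1 : (1:ℝ) ≤ 1 + τ * (x - 1) := by nlinarith [hτ'.1, hτ'.2]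
        rw [norm_mul]
        have hcp : ‖(((1 + τ * (x - 1) : ℝ)) : ℂ) ^ (Complex.I*a - (m:ℂ))‖ ≤ 1 := by
          rw [Complex.norm_cpow_eq_rpow_re_of_pos (by linarith)]
          refine Real.rpow_le_one_of_one_le_of_nonpos hb1 ?_
          simp
        calc ‖p m τ‖ * ‖(((1 + τ * (x - 1) : ℝ)) : ℂ) ^ (Complex.I*a - (m:ℂ))‖
            ≤ (Kc β * |a|^m) * 1 := by
              exact mul_le_mul (hbound m τ hτ') hcp (norm_nonneg _)
                (mul_nonneg (Kc_pos β).le (pow_nonneg (abs_nonneg a) m))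
          _ = Kc β * |a|^m := by ring
      have hpow : Kc β * |a|^m ≤ Kc β * (|a|^(2*β) / |a|) := by
        have h1 : |a|^m * |a| ≤ |a|^(2*β) := by
          rw [← pow_succ]
          exact pow_le_pow_right₀ (by linarith) (by omega)
        have h2 : |a|^m ≤ |a|^(2*β) / |a| := (le_div_iff₀ hapos).2 h1
        exact mul_le_mul_of_nonneg_left h2 (Kc_pos β).le
      calc ‖Gint (p m) (Complex.I*a - m) x‖ ≤ (Kc β * |a|^m) * |1 - 0| := hGb
        _ = Kc β * |a|^m := by norm_num
        _ ≤ Kc β * (|a|^(2*β) / |a|) := hpow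
    calc ‖E‖ ≤ ∑ m ∈ Finset.range (2*β), ‖Gint (p m) (Complex.I*a - m) x‖ :=
        norm_sum_le _ _
      _ ≤ ∑ _m ∈ Finset.range (2*β), Kc β * (|a|^(2*β) / |a|) :=
        Finset.sum_le_sum hterm
      _ = (2*(β:ℝ)) * (Kc β * (|a|^(2*β) / |a|)) := by
        rw [Finset.sum_const, Finset.card_range]
        push_cast
        ring
  -- lower bound on T
  have hTval : T = zc a β * Gint (fun τ => ((τ^β * (1-τ)^β : ℝ) : ℂ))
      (Complex.I*a - ((2*β:ℕ):ℂ)) x := by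
    rw [hT, ← Gint_const_mul]
    refine Gint_congr (fun τ _ => ?_) _ _
    rw [hmain τ]; ring
  set M := Gint (fun τ => ((τ^β * (1-τ)^β : ℝ) : ℂ)) (Complex.I*a - ((2*β:ℕ):ℂ)) x with hM
  have hMre : kap β * Bint β ≤ M.re := by
    have hint : IntervalIntegrable
        (fun τ : ℝ => ((τ^β * (1-τ)^β : ℝ) : ℂ) * (((1 + τ * (x - 1) : ℝ)) : ℂ)
          ^ (Complex.I*a - ((2*β:ℕ):ℂ))) volume 0 1 :=
      integrable_integrand _ (by continuity) _ hv1 hv2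
    have hMre1 : M.re = ∫ τ in (0:ℝ)..1,
        (((τ^β * (1-τ)^β : ℝ) : ℂ) * (((1 + τ * (x - 1) : ℝ)) : ℂ)
          ^ (Complex.I*a - ((2*β:ℕ):ℂ))).re := by
      rw [hM, Gint]
      exact (Complex.reCLM.intervalIntegral_comp_comm hint).symm
    rw [hMre1]
    have hptwise : ∀ τ ∈ Set.Icc (0:ℝ) 1,
        kap β * (τ^β * (1-τ)^β)
          ≤ (((τ^β * (1-τ)^β : ℝ) : ℂ) * (((1 + τ * (x - 1) : ℝ)) : ℂ)
            ^ (Complex.I*a - ((2*β:ℕ):ℂ))).re := by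
      intro τ hτ
      have hb1 : (1:ℝ) ≤ 1 + τ * (x - 1) := by nlinarith [hτ.1, hτ.2]
      have hb2 : 1 + τ * (x - 1) ≤ 5/4 := by nlinarith [hτ.1, hτ.2]
      have hab : Real.log (1 + τ * (x - 1)) * |a| ≤ 1 := by
        have hL : Real.log (1 + τ * (x - 1)) ≤ τ * (x - 1) := by
          have := Real.log_le_sub_one_of_pos (show (0:ℝ) < 1 + τ * (x-1) by linarith)
          linarith
        have h2 : τ * (x - 1) ≤ x - 1 := by nlinarith [hτ.1, hτ.2]
        have h3 : (x - 1) * |a| ≤ 1 := by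
          have : x - 1 < 1/|a| := by linarith
          calc (x-1) * |a| ≤ (1/|a|) * |a| := by
                refine mul_le_mul_of_nonneg_right ?_ hapos.le
                linarith
            _ = 1 := by field_simp
        calc Real.log (1 + τ * (x - 1)) * |a| ≤ (x - 1) * |a| := by
              refine mul_le_mul_of_nonneg_right ?_ hapos.le
              linarith
          _ ≤ 1 := h3
      have hrecp := re_cpow_ge hb1 hb2 hab β
      have hre : (((τ^β * (1-τ)^β : ℝ) : ℂ) * (((1 + τ * (x - 1) : ℝ)) : ℂ)
            ^ (Complex.I*a - ((2*β:ℕ):ℂ))).re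
          = (τ^β * (1-τ)^β) * ((((1 + τ * (x - 1) : ℝ)) : ℂ)
            ^ (Complex.I*a - ((2*β:ℕ):ℂ))).re := Complex.re_ofReal_mul _ _
      rw [hre]
      have hnn : (0:ℝ) ≤ τ^β * (1-τ)^β := by
        have h1 := hτ.1
        have h2 : (0:ℝ) ≤ 1 - τ := by linarith [hτ.2]
        exact mul_nonneg (pow_nonneg h1 _) (pow_nonneg h2 _)
      calc kap β * (τ^β * (1-τ)^β) = (τ^β * (1-τ)^β) * kap β := by ring
        _ ≤ (τ^β * (1-τ)^β) * ((((1 + τ * (x - 1) : ℝ)) : ℂ)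
            ^ (Complex.I*a - ((2*β:ℕ):ℂ))).re := mul_le_mul_of_nonneg_left hrecp hnn
    have hint1 : IntervalIntegrable (fun τ : ℝ => kap β * (τ^β * (1-τ)^β)) volume 0 1 :=
      Continuous.intervalIntegrable (by continuity) 0 1
    have hint2 : IntervalIntegrable (fun τ : ℝ =>
        (((τ^β * (1-τ)^β : ℝ) : ℂ) * (((1 + τ * (x - 1) : ℝ)) : ℂ)
          ^ (Complex.I*a - ((2*β:ℕ):ℂ))).re) volume 0 1 := by
      have := Complex.continuous_re.comp_continuousOn
        (contOn_integrand (fun τ : ℝ => ((τ^β * (1-τ)^β : ℝ) : ℂ)) (by continuity)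
          (Complex.I*a - ((2*β:ℕ):ℂ)) hv1 hv2)
      refine ContinuousOn.intervalIntegrable ?_
      rw [uIcc01]
      exact this
    have hmono := intervalIntegral.integral_mono_on (by norm_num : (0:ℝ) ≤ 1) hint1 hint2
      hptwise
    calc kap β * Bint β = ∫ τ in (0:ℝ)..1, kap β * (τ^β * (1-τ)^β) := by
          rw [Bint, intervalIntegral.integral_const_mul]
      _ ≤ _ := hmono
  have hMnorm : kap β * Bint β ≤ ‖M‖ := by
    calc kap β * Bint β ≤ M.re := hMre
      _ ≤ |M.re| := le_abs_self _
      _ ≤ ‖M‖ := Complex.abs_re_le_norm M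
      _ = ‖M‖ := rfl
  have hTnorm : |a|^(2*β) * (kap β * Bint β) ≤ ‖T‖ := by
    rw [hTval, norm_mul]
    exact mul_le_mul (zc_norm_ge a β) hMnorm
      (mul_pos (kap_pos β) (Bint_pos β)).le (norm_nonneg _)
  -- combine
  have hSnorm : (kap β * Bint β/2) * |a|^(2*β) ≤ ‖S‖ := by
    have h1 : ‖T‖ ≤ ‖S‖ + ‖E‖ := by
      have : T = S - E := by rw [hsplit]; ring
      rw [this]
      exact norm_sub_le _ _
    have h2 : (2*(β:ℝ)) * (Kc β * (|a|^(2*β) / |a|)) ≤ (kap β * Bint β/2) * |a|^(2*β) := by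
      have he : (2*(β:ℝ)) * (Kc β * (|a|^(2*β) / |a|))
          = (2*(β:ℝ) * Kc β) * |a|^(2*β) / |a| := by ring
      rw [he]
      rw [div_le_iff₀ hapos]
      calc (2*(β:ℝ) * Kc β) * |a|^(2*β) ≤ ((kap β * Bint β/2)*|a|) * |a|^(2*β) := by
            refine mul_le_mul_of_nonneg_right hErr (by positivity)
        _ = (kap β * Bint β/2) * |a|^(2*β) * |a| := by ring
    nlinarith [hEbound, hTnorm]
  -- final norm computation
  have hc0 : ‖(-Complex.I/(lam:ℂ)) * (Complex.I*(a:ℂ)+1)‖ ≥ |a| / |lam| := by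
    rw [norm_mul, norm_div, norm_neg, Complex.norm_I, Complex.norm_real, Real.norm_eq_abs]
    have h1 : |a| ≤ ‖Complex.I*(a:ℂ)+1‖ := by
      have he : (Complex.I*(a:ℂ)+1).im = a := by simp
      calc |a| = |(Complex.I*(a:ℂ)+1).im| := by rw [he]
        _ ≤ ‖Complex.I*(a:ℂ)+1‖ := Complex.abs_im_le_norm _
        _ = ‖Complex.I*(a:ℂ)+1‖ := rfl
    have hlam' : 0 < |lam| := abs_pos.2 hlam
    calc |a| / |lam| = (1/|lam|) * |a| := by ring
      _ ≤ (1/|lam|) * ‖Complex.I*(a:ℂ)+1‖ := by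
          refine mul_le_mul_of_nonneg_left h1 (by positivity)
  rw [norm_mul]
  have hlam' : 0 < |lam| := abs_pos.2 hlam
  calc (kap β * Bint β/2) * |a|^(2*β+1) / |lam|
      = (|a| / |lam|) * ((kap β * Bint β/2) * |a|^(2*β)) := by
        rw [pow_succ]; ring
    _ ≤ ‖(-Complex.I/(lam:ℂ)) * (Complex.I*(a:ℂ)+1)‖ * ‖S‖ := by
        have hkb := mul_pos (kap_pos β) (Bint_pos β)
        refine mul_le_mul hc0 hSnorm
          (mul_nonneg (by linarith) (pow_nonneg (abs_nonneg a) _)) (norm_nonneg _)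


end TwistedAux

open TwistedAux in
/-- Lower bound for the solution of the twisted equation:
`‖Û^β f‖_{L²(I_ν)} ≥ (C/|λ|)·|a|^{2β+1/2}` for `|a| ≥ c`, where `I_ν = [1, 1+1/|a|]`. -/
theorem twisted_solution_lower_bound (β : ℕ) (q : ℝ → ℂ)
    (hq : ContDiff ℝ (⊤ : ℕ∞) q)
    (hsupp : Function.support q ⊆ Set.Icc (3 / 4 : ℝ) (4 / 3))
    (hone : Set.EqOn q 1 (Set.Icc (1 : ℝ) (5 / 4))) :
    ∃ c > 4, ∃ C > 0, ∀ lam : ℝ, lam ≠ 0 → ∀ a : ℝ, c ≤ |a| →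
      ENNReal.ofReal (C / |lam| * |a| ^ (2 * (β : ℝ) + 1 / 2)) ≤
        L2 ((hatU (Complex.I * a))^[β] (ffun q a lam))
          (Set.Icc (1 : ℝ) (1 + 1 / |a|)) := by
  have hCB := mul_pos (kap_pos β) (Bint_pos β)
  set C : ℝ := kap β * Bint β / 2 with hC
  have hCpos : 0 < C := by rw [hC]; linarith
  have hKb := Kc_pos β
  have hβ0 : (0:ℝ) ≤ (β:ℝ) := Nat.cast_nonneg β
  have hdiv0 : 0 ≤ (2*(β:ℝ)) * Kc β / C := by positivity
  set c : ℝ := 2*(β:ℝ) + 5 + (2*(β:ℝ)) * Kc β / C with hc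
  have hc4 : (4:ℝ) < c := by rw [hc]; linarith
  refine ⟨c, hc4, C, hCpos, ?_⟩
  intro lam hlam a hca
  have ha4 : (4:ℝ) < |a| := lt_of_lt_of_le hc4 hca
  have hapos : (0:ℝ) < |a| := by linarith
  have hlampos : (0:ℝ) < |lam| := abs_pos.2 hlam
  have hβa : 2*(β:ℝ)+2 ≤ |a| := by
    have : 2*(β:ℝ)+2 ≤ c := by rw [hc]; linarith
    linarith
  have hErr : 2*(β:ℝ)*Kc β ≤ C*|a| := by
    have h1 : C * ((2*(β:ℝ)) * Kc β / C) = (2*(β:ℝ)) * Kc β := by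
      field_simp
    have h2 : (2*(β:ℝ)) * Kc β / C ≤ c := by rw [hc]; linarith
    calc 2*(β:ℝ)*Kc β = C * ((2*(β:ℝ)) * Kc β / C) := h1.symm
      _ ≤ C * c := mul_le_mul_of_nonneg_left h2 hCpos.le
      _ ≤ C * |a| := mul_le_mul_of_nonneg_left hca hCpos.le
  have hpw := pointwise_bound β q hone hlam ha4 hβa hErr
  set D : ℝ := C * |a|^(2*β+1) / |lam| with hD
  have hDpos : 0 < D := by rw [hD]; positivity
  set F := (hatU (Complex.I * a))^[β] (ffun q a lam) with hF
  -- lintegral lower bound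
  have h1 : ENNReal.ofReal (D^2) * volume (Set.Ioo (1:ℝ) (1+1/|a|))
      ≤ ∫⁻ ξ in Set.Icc (1:ℝ) (1+1/|a|), ENNReal.ofReal (‖F ξ‖^2) := by
    calc ENNReal.ofReal (D^2) * volume (Set.Ioo (1:ℝ) (1+1/|a|))
        = ∫⁻ _ξ in Set.Ioo (1:ℝ) (1+1/|a|), ENNReal.ofReal (D^2) := by
          rw [setLIntegral_const]
      _ ≤ ∫⁻ ξ in Set.Ioo (1:ℝ) (1+1/|a|), ENNReal.ofReal (‖F ξ‖^2) := by
          refine setLIntegral_mono' measurableSet_Ioo ?_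
          intro ξ hξ
          refine ENNReal.ofReal_le_ofReal ?_
          refine pow_le_pow_left₀ hDpos.le ?_ 2
          rw [hD]
          exact hpw ξ hξ
      _ ≤ ∫⁻ ξ in Set.Icc (1:ℝ) (1+1/|a|), ENNReal.ofReal (‖F ξ‖^2) :=
          lintegral_mono_set Set.Ioo_subset_Icc_self
  have hvol : volume (Set.Ioo (1:ℝ) (1+1/|a|)) = ENNReal.ofReal (1/|a|) := by
    rw [Real.volume_Ioo]
    congr 1
    ring
  -- power identities
  have hA1 : (|a| ^ (2*(β:ℝ) + 1/2)) ^ (2:ℕ) = |a| ^ (4*β+1) := by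
    rw [← Real.rpow_natCast (|a| ^ (2*(β:ℝ)+1/2)) 2, ← Real.rpow_mul (abs_nonneg a),
      ← Real.rpow_natCast |a| (4*β+1)]
    congr 1
    push_cast
    ring
  have hA2 : (|a| ^ (2*β+1)) ^ (2:ℕ) = |a| ^ (4*β+1) * |a| := by
    rw [← pow_mul, ← pow_succ]
    congr 1
    omega
  have hXeq : (C / |lam| * |a| ^ (2*(β:ℝ) + 1/2))^(2:ℕ) = D^(2:ℕ) * (1/|a|) := by
    calc (C / |lam| * |a| ^ (2*(β:ℝ)+1/2))^(2:ℕ)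
        = C^2/|lam|^2 * ((|a| ^ (2*(β:ℝ)+1/2))^(2:ℕ)) := by ring
      _ = C^2/|lam|^2 * |a|^(4*β+1) := by rw [hA1]
      _ = (C * |a|^(2*β+1)/|lam|)^(2:ℕ) * (1/|a|) := by
          have he : (C * |a|^(2*β+1)/|lam|)^(2:ℕ)
              = C^2 * ((|a|^(2*β+1))^(2:ℕ))/|lam|^2 := by ring
          rw [he, hA2]
          field_simp
      _ = D^(2:ℕ) * (1/|a|) := by rw [hD]
  have hXpos : 0 < C / |lam| * |a| ^ (2*(β:ℝ) + 1/2) := by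
    have := Real.rpow_pos_of_pos hapos (2*(β:ℝ) + 1/2)
    positivity
  rw [L2]
  calc ENNReal.ofReal (C / |lam| * |a| ^ (2*(β:ℝ)+1/2))
      = (ENNReal.ofReal ((C / |lam| * |a| ^ (2*(β:ℝ)+1/2))^(2:ℕ))) ^ (1/2 : ℝ) := by
        rw [ENNReal.ofReal_rpow_of_pos (by positivity)]
        congr 1
        rw [← Real.rpow_natCast (C / |lam| * |a| ^ (2*(β:ℝ)+1/2)) 2,
          ← Real.rpow_mul hXpos.le]
        norm_num
      _ = (ENNReal.ofReal (D^(2:ℕ) * (1/|a|))) ^ (1/2 : ℝ) := by rw [hXeq]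
      _ = (ENNReal.ofReal (D^(2:ℕ)) * ENNReal.ofReal (1/|a|)) ^ (1/2 : ℝ) := by
        rw [ENNReal.ofReal_mul (by positivity)]
      _ = (ENNReal.ofReal (D^2) * volume (Set.Ioo (1:ℝ) (1+1/|a|))) ^ (1/2 : ℝ) := by
        rw [hvol]
      _ ≤ (∫⁻ ξ in Set.Icc (1:ℝ) (1+1/|a|), ENNReal.ofReal (‖F ξ‖^2)) ^ (1/2 : ℝ) :=
        ENNReal.rpow_le_rpow h1 (by norm_num)
end
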